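/- arXiv:1903.06882 — 10 statements merged into one kernel-verified Lean document; each statement's English description precedes it below -/
import Mathlib

section
/- The bracket relations [L_m, L_n] = (n-m)L_{m+n} for m,n ∈ pℤ, [L_m, L_r] = r L_{m+r} for m ∈ pℤ, r ∉ pℤ, and [L_r, L_s] = 0 for r,s ∉ pℤ, extended bilinearly and antisymmetrically, satisfy the Jacobi identity, so they define a Lie algebra structure on the ℂ-vector space with basis {L_m : m ∈ ℤ}. -/
open Finsupp

-- Structure constants of the gap-`p` Witt algebra `g'` on the basis `{L_m : m ∈ ℤ}`:
-- `[L_m,L_n] = (n-m)L_{m+n}` for `m,n ∈ pℤ`, `[L_m,L_r] = r L_{m+r}` for `m ∈ pℤ`, `r ∉ pℤ`,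
-- `[L_r,L_s] = 0` for `r,s ∉ pℤ`, extended antisymmetrically.
open Classical in
noncomputable def wittB (p : ℕ) (m n : ℤ) : ℤ →₀ ℂ :=
  if (p : ℤ) ∣ m ∧ (p : ℤ) ∣ n then (n - m : ℂ) • Finsupp.single (m + n) 1
  else if (p : ℤ) ∣ m then (n : ℂ) • Finsupp.single (m + n) 1
  else if (p : ℤ) ∣ n then (-(m : ℂ)) • Finsupp.single (m + n) 1
  else 0

-- Bilinear extension of a bracket given by structure constants on a basis.
noncomputable def bilinExt {B C : Type} (b : B → B → (C →₀ ℂ)) (x y : B →₀ ℂ) : C →₀ ℂ :=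
  x.sum fun m a => y.sum fun n c => (a * c) • b m n

open Classical in
noncomputable def wittC (p : ℕ) (m n : ℤ) : ℂ :=
  if (p : ℤ) ∣ m ∧ (p : ℤ) ∣ n then (n - m : ℂ)
  else if (p : ℤ) ∣ m then (n : ℂ)
  else if (p : ℤ) ∣ n then (-(m : ℂ))
  else 0

lemma wittB_eq (p : ℕ) (m n : ℤ) : wittB p m n = Finsupp.single (m + n) (wittC p m n) := by
  rw [show Finsupp.single (m+n) (wittC p m n) = wittC p m n • Finsupp.single (m+n) (1:ℂ) by
    rw [Finsupp.smul_single', mul_one]]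
  by_cases hm : (p:ℤ) ∣ m <;> by_cases hn : (p:ℤ) ∣ n <;>
    simp only [wittB, wittC, hm, hn, and_true, and_false, if_true, if_false, true_and,
      not_true, not_false_iff, zero_smul, if_neg, if_pos, and_self]

lemma wittC_skew (p : ℕ) (m n : ℤ) : wittC p m n = - wittC p n m := by
  by_cases hm : (p:ℤ) ∣ m <;> by_cases hn : (p:ℤ) ∣ n <;>
    simp [wittC, hm, hn]

lemma bilinExt_zero_left {B C : Type} (b : B → B → (C →₀ ℂ)) (y : B →₀ ℂ) :
    bilinExt b 0 y = 0 := by simp [bilinExt]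

lemma bilinExt_zero_right {B C : Type} (b : B → B → (C →₀ ℂ)) (x : B →₀ ℂ) :
    bilinExt b x 0 = 0 := by simp [bilinExt]

lemma bilinExt_add_left {B C : Type} (b : B → B → (C →₀ ℂ)) (x x' y : B →₀ ℂ) :
    bilinExt b (x + x') y = bilinExt b x y + bilinExt b x' y := by
  unfold bilinExt
  rw [Finsupp.sum_add_index']
  · intro m; simp
  · intro m a a'; simp [add_mul, add_smul, Finsupp.sum_add]

lemma bilinExt_add_right {B C : Type} (b : B → B → (C →₀ ℂ)) (x y y' : B →₀ ℂ) :
    bilinExt b x (y + y') = bilinExt b x y + bilinExt b x y' := by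
  unfold bilinExt
  rw [← Finsupp.sum_add]
  refine Finsupp.sum_congr fun m _ => ?_
  rw [Finsupp.sum_add_index']
  · intro n; simp
  · intro n c c'; simp [mul_add, add_smul]

lemma bilinExt_single_single {B C : Type} (b : B → B → (C →₀ ℂ)) (m n : B) (a c : ℂ) :
    bilinExt b (Finsupp.single m a) (Finsupp.single n c) = (a * c) • b m n := by
  unfold bilinExt
  rw [Finsupp.sum_single_index, Finsupp.sum_single_index]
  · simp
  · rw [Finsupp.sum_single_index] <;> simp


lemma jacC (p : ℕ) (m n k : ℤ) :
    wittC p n k * wittC p m (n + k) + wittC p k m * wittC p n (k + m)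
      + wittC p m n * wittC p k (m + n) = 0 := by
  by_cases hm : (p:ℤ) ∣ m <;> by_cases hn : (p:ℤ) ∣ n <;> by_cases hk : (p:ℤ) ∣ k <;>
    by_cases hmn : (p:ℤ) ∣ (m+n) <;> by_cases hnk : (p:ℤ) ∣ (n+k) <;>
    by_cases hkm : (p:ℤ) ∣ (k+m) <;>
    simp only [wittC, hm, hn, hk, hmn, hnk, hkm, and_true, and_false, true_and, false_and,
      if_true, if_false, and_self, not_true, not_false_iff] <;>
  first
    | (push_cast; ring1)
    | exact absurd (dvd_add hm hn) hmn
    | exact absurd (dvd_add hn hk) hnk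
    | exact absurd (dvd_add hk hm) hkm
    | exact absurd ((dvd_add_right hm).mp hmn) hn
    | exact absurd ((dvd_add_left hn).mp hmn) hm
    | exact absurd ((dvd_add_right hn).mp hnk) hk
    | exact absurd ((dvd_add_left hk).mp hnk) hn
    | exact absurd ((dvd_add_right hk).mp hkm) hm
    | exact absurd ((dvd_add_left hm).mp hkm) hk

lemma wittB_skew (p : ℕ) (m n : ℤ) : wittB p m n = - wittB p n m := by
  rw [wittB_eq, wittB_eq, add_comm n m, wittC_skew, ← Finsupp.single_neg]

lemma skew_single (p : ℕ) (m : ℤ) (a : ℂ) :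
    ∀ y, bilinExt (wittB p) (Finsupp.single m a) y = - bilinExt (wittB p) y (Finsupp.single m a) := by
  intro y
  induction y using Finsupp.induction with
  | zero => simp [bilinExt_zero_left, bilinExt_zero_right]
  | single_add n c f hnf hc ih =>
    rw [bilinExt_add_right, bilinExt_add_left, neg_add, ih, bilinExt_single_single,
      bilinExt_single_single, wittB_skew p m n, mul_comm a c, smul_neg]

lemma skew (p : ℕ) : ∀ x y, bilinExt (wittB p) x y = - bilinExt (wittB p) y x := by
  intro x y
  induction x using Finsupp.induction with
  | zero => simp [bilinExt_zero_left, bilinExt_zero_right]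
  | single_add m a f hmf ha ih =>
    rw [bilinExt_add_left, bilinExt_add_right, neg_add, skew_single, ih]

lemma jac_single (p : ℕ) (m n k : ℤ) (a c d : ℂ) :
    bilinExt (wittB p) (Finsupp.single m a)
        (bilinExt (wittB p) (Finsupp.single n c) (Finsupp.single k d))
      + bilinExt (wittB p) (Finsupp.single n c)
        (bilinExt (wittB p) (Finsupp.single k d) (Finsupp.single m a))
      + bilinExt (wittB p) (Finsupp.single k d)
        (bilinExt (wittB p) (Finsupp.single m a) (Finsupp.single n c)) = 0 := by
  simp only [bilinExt_single_single, wittB_eq, Finsupp.smul_single', bilinExt_single_single]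
  rw [show m + (n + k) = m + n + k by ring, show n + (k + m) = m + n + k by ring,
    show k + (m + n) = m + n + k by ring]
  have h := jacC p m n k
  ext i
  simp only [Finsupp.add_apply, Finsupp.single_apply, Finsupp.coe_zero, Pi.zero_apply]
  split_ifs with hi
  · linear_combination (a * c * d) * h
  · ring

lemma add_shuffle {M : Type*} [AddCommGroup M] (A1 B1 A2 B2 A3 B3 : M)
    (hA : A1 + A2 + A3 = 0) (hB : B1 + B2 + B3 = 0) :
    (A1 + B1) + (A2 + B2) + (A3 + B3) = 0 := by
  calc (A1 + B1) + (A2 + B2) + (A3 + B3) = (A1 + A2 + A3) + (B1 + B2 + B3) := by abel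
  _ = 0 := by rw [hA, hB, add_zero]

lemma jac2 (p : ℕ) (m n : ℤ) (a c : ℂ) : ∀ z,
    bilinExt (wittB p) (Finsupp.single m a)
        (bilinExt (wittB p) (Finsupp.single n c) z)
      + bilinExt (wittB p) (Finsupp.single n c)
        (bilinExt (wittB p) z (Finsupp.single m a))
      + bilinExt (wittB p) z
        (bilinExt (wittB p) (Finsupp.single m a) (Finsupp.single n c)) = 0 := by
  intro z
  induction z using Finsupp.induction with
  | zero => simp [bilinExt_zero_left, bilinExt_zero_right]
  | single_add k d f hkf hd ih =>
    simp only [bilinExt_add_left, bilinExt_add_right]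
    exact add_shuffle _ _ _ _ _ _ (jac_single p m n k a c d) ih

lemma jac1 (p : ℕ) (m : ℤ) (a : ℂ) : ∀ y z,
    bilinExt (wittB p) (Finsupp.single m a) (bilinExt (wittB p) y z)
      + bilinExt (wittB p) y (bilinExt (wittB p) z (Finsupp.single m a))
      + bilinExt (wittB p) z (bilinExt (wittB p) (Finsupp.single m a) y) = 0 := by
  intro y z
  induction y using Finsupp.induction with
  | zero => simp [bilinExt_zero_left, bilinExt_zero_right]
  | single_add n c g hng hc ih =>
    simp only [bilinExt_add_left, bilinExt_add_right]
    exact add_shuffle _ _ _ _ _ _ (jac2 p m n a c z) ih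

lemma jac (p : ℕ) : ∀ x y z : ℤ →₀ ℂ,
    bilinExt (wittB p) x (bilinExt (wittB p) y z)
      + bilinExt (wittB p) y (bilinExt (wittB p) z x)
      + bilinExt (wittB p) z (bilinExt (wittB p) x y) = 0 := by
  intro x y z
  induction x using Finsupp.induction with
  | zero => simp [bilinExt_zero_left, bilinExt_zero_right]
  | single_add m a f hmf ha ih =>
    simp only [bilinExt_add_left, bilinExt_add_right]
    exact add_shuffle _ _ _ _ _ _ (jac1 p m a y z) ih


/-- The bracket relations of the gap-`p` Witt algebra, extended bilinearly and
antisymmetrically, satisfy the Jacobi identity, hence define a Lie algebra structure on the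
ℂ-vector space with basis `{L_m : m ∈ ℤ}`. -/
theorem stmt_0 (p : ℕ) (hp : 1 < p) :
    (∀ x y : ℤ →₀ ℂ, bilinExt (wittB p) x y = - bilinExt (wittB p) y x) ∧
    (∀ x y z : ℤ →₀ ℂ,
      bilinExt (wittB p) x (bilinExt (wittB p) y z)
        + bilinExt (wittB p) y (bilinExt (wittB p) z x)
        + bilinExt (wittB p) z (bilinExt (wittB p) x y) = 0) := by
  exact ⟨skew p, jac p⟩
end

section
/- The center of the gap-p Virasoro algebra g is exactly the p-dimensional space spanned by C_0, C_1, ..., C_{p-1}. -/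
open Finsupp

-- Structure constants of the gap-`p` Virasoro algebra `g` (see the paper, Section 1).
open Classical in
noncomputable def gVirB (p : ℕ) (x y : ℤ ⊕ ZMod p) : (ℤ ⊕ ZMod p) →₀ ℂ :=
  match x, y with
  | Sum.inl m, Sum.inl n =>
    if (p : ℤ) ∣ m ∧ (p : ℤ) ∣ n then
      (n - m : ℂ) • Finsupp.single (Sum.inl (m + n)) 1
        + (if m + n = 0 then
            ((1 : ℂ) / 12) * (((m / (p : ℤ) : ℤ) : ℂ) ^ 3 - ((m / (p : ℤ) : ℤ) : ℂ))
          else 0) • Finsupp.single (Sum.inr 0) 1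
    else if (p : ℤ) ∣ m then (n : ℂ) • Finsupp.single (Sum.inl (m + n)) 1
    else if (p : ℤ) ∣ n then (-(m : ℂ)) • Finsupp.single (Sum.inl (m + n)) 1
    else if m + n = 0 then (m : ℂ) • Finsupp.single (Sum.inr (m : ZMod p)) 1
    else 0
  | _, _ => 0

lemma gVirB_right_inr (p : ℕ) (a : ℤ ⊕ ZMod p) (i : ZMod p) : gVirB p a (Sum.inr i) = 0 := by
  cases a <;> rfl

lemma gVirB_left_inr (p : ℕ) (a : ℤ ⊕ ZMod p) (i : ZMod p) : gVirB p (Sum.inr i) a = 0 := by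
  cases a <;> rfl

open Classical in
lemma gVirB_inl_inl (p : ℕ) (m n : ℤ) : gVirB p (Sum.inl m) (Sum.inl n) =
    if (p : ℤ) ∣ m ∧ (p : ℤ) ∣ n then
      (n - m : ℂ) • Finsupp.single (Sum.inl (m + n)) 1
        + (if m + n = 0 then
            ((1 : ℂ) / 12) * (((m / (p : ℤ) : ℤ) : ℂ) ^ 3 - ((m / (p : ℤ) : ℤ) : ℂ))
          else 0) • Finsupp.single (Sum.inr 0) 1
    else if (p : ℤ) ∣ m then (n : ℂ) • Finsupp.single (Sum.inl (m + n)) 1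
    else if (p : ℤ) ∣ n then (-(m : ℂ)) • Finsupp.single (Sum.inl (m + n)) 1
    else if m + n = 0 then (m : ℂ) • Finsupp.single (Sum.inr (m : ZMod p)) 1
    else 0 := rfl

lemma gVirB_apply_ne (p : ℕ) (k n t : ℤ) (h : k + n ≠ t) :
    (gVirB p (Sum.inl k) (Sum.inl n)) (Sum.inl t : ℤ ⊕ ZMod p) = 0 := by
  rw [gVirB_inl_inl]
  split_ifs <;>
    simp_all [Finsupp.single_apply, Finsupp.add_apply, Finsupp.smul_apply]

lemma gVirB_apply_eq (p : ℕ) (k n : ℤ) (hn : (p:ℤ) ∣ n) :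
    (gVirB p (Sum.inl k) (Sum.inl n)) (Sum.inl (k+n) : ℤ ⊕ ZMod p)
      = if (p:ℤ) ∣ k then ((n:ℂ) - k) else -(k:ℂ) := by
  rw [gVirB_inl_inl]
  split_ifs <;> simp_all [Finsupp.single_apply, Finsupp.add_apply, Finsupp.smul_apply]

lemma gVir_key (p : ℕ) (hp : 1 < p) (x : (ℤ ⊕ ZMod p) →₀ ℂ)
    (h : ∀ y, bilinExt (gVirB p) x y = 0) (m : ℤ) : x (Sum.inl m) = 0 := by
  set n : ℤ := if (p:ℤ) ∣ m then m + p else p with hn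
  have hpn : (p:ℤ) ∣ n := by
    rw [hn]; split_ifs with hd
    · exact dvd_add hd dvd_rfl
    · exact dvd_rfl
  have h1 := h (Finsupp.single (Sum.inl n) (1:ℂ))
  have h2 : bilinExt (gVirB p) x (Finsupp.single (Sum.inl n) 1)
      = x.sum fun k a => a • gVirB p k (Sum.inl n) := by
    unfold bilinExt
    refine Finsupp.sum_congr fun k _ => ?_
    rw [Finsupp.sum_single_index (by simp)]
    simp
  have h3 := congrArg (fun f => f (Sum.inl (m + n) : ℤ ⊕ ZMod p)) (h2 ▸ h1)
  simp only [Finsupp.sum_apply, Finsupp.smul_apply, Finsupp.coe_zero, Pi.zero_apply] at h3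
  rw [Finsupp.sum_eq_single (Sum.inl m : ℤ ⊕ ZMod p)
      (fun b hb hbm => ?_) (by simp)] at h3
  · rw [gVirB_apply_eq p m n hpn] at h3
    have hc : (if (p:ℤ) ∣ m then ((n:ℂ) - m) else -(m:ℂ)) ≠ 0 := by
      split_ifs with hd
      · rw [hn, if_pos hd]
        push_cast
        simp only [add_sub_cancel_left]
        exact_mod_cast Nat.cast_ne_zero.mpr (by omega)
      · intro hc
        apply hd
        have : (m:ℂ) = 0 := by linear_combination -hc
        have : m = 0 := by exact_mod_cast this
        simp [this]
    rcases mul_eq_zero.mp h3 with h | h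
    · exact h
    · exact absurd h hc
  · rcases b with k | i
    · rw [gVirB_apply_ne p k n (m+n) (by intro hkn; exact hbm (congrArg Sum.inl (by omega)))]
      simp
    · simp [gVirB_left_inr]


/-- The center of the gap-`p` Virasoro algebra `g` is exactly the `p`-dimensional space
spanned by `C_0, C_1, …, C_{p-1}`. -/
theorem stmt_2 (p : ℕ) (hp : 1 < p) :
    {x : (ℤ ⊕ ZMod p) →₀ ℂ |
        ∀ y, bilinExt (gVirB p) x y = 0 ∧ bilinExt (gVirB p) y x = 0}
      = ↑(Submodule.span ℂ
          (Set.range fun i : ZMod p =>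
            (Finsupp.single (Sum.inr i) (1 : ℂ) : (ℤ ⊕ ZMod p) →₀ ℂ))) ∧
    Module.finrank ℂ
        ↥(Submodule.span ℂ
          (Set.range fun i : ZMod p =>
            (Finsupp.single (Sum.inr i) (1 : ℂ) : (ℤ ⊕ ZMod p) →₀ ℂ))) = p := by
  haveI : NeZero p := ⟨by omega⟩
  have hspan : (Submodule.span ℂ
      (Set.range fun i : ZMod p =>
        (Finsupp.single (Sum.inr i) (1 : ℂ) : (ℤ ⊕ ZMod p) →₀ ℂ)))
      = Finsupp.supported ℂ ℂ (Set.range (Sum.inr : ZMod p → ℤ ⊕ ZMod p)) := by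
    rw [Finsupp.supported_eq_span_single]
    congr 1
    rw [← Set.range_comp]
    rfl
  constructor
  · ext x
    simp only [Set.mem_setOf_eq, SetLike.mem_coe, hspan, Finsupp.mem_supported']
    constructor
    · intro h a ha
      rcases a with m | i
      · exact gVir_key p hp x (fun y => (h y).1) m
      · exact absurd ⟨i, rfl⟩ ha
    · intro h y
      have hsupp : ∀ a ∈ x.support, ∀ i : ZMod p, a = Sum.inr i ∨ True := fun _ _ _ => Or.inr trivial
      have hx : ∀ a ∈ x.support, ∃ i : ZMod p, a = Sum.inr i := by
        intro a ha
        rcases a with m | i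
        · exact absurd (h (Sum.inl m) (by rintro ⟨i, ⟨⟩⟩)) (Finsupp.mem_support_iff.mp ha)
        · exact ⟨i, rfl⟩
      constructor
      · unfold bilinExt
        apply Finset.sum_eq_zero
        intro a ha
        obtain ⟨i, rfl⟩ := hx a ha
        apply Finset.sum_eq_zero
        intro b _
        simp [gVirB_left_inr]
      · unfold bilinExt
        apply Finset.sum_eq_zero
        intro a _
        apply Finset.sum_eq_zero
        intro b hb
        obtain ⟨i, rfl⟩ := hx b hb
        simp [gVirB_right_inr]
  · have hli : LinearIndependent ℂ
        (fun i : ZMod p => (Finsupp.single (Sum.inr i) (1 : ℂ) : (ℤ ⊕ ZMod p) →₀ ℂ)) := by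
      have := (Finsupp.basisSingleOne (R := ℂ) (ι := ℤ ⊕ ZMod p)).linearIndependent.comp
        Sum.inr Sum.inr_injective
      simpa [Function.comp_def, Finsupp.coe_basisSingleOne] using this
    rw [finrank_span_eq_card hli, ZMod.card]
end

section
/- Inside the centerless Heisenberg-Virasoro algebra, the subspace spanned by {x_m : m ∈ pℤ} ∪ {I_r : r ∈ ℤ \ pℤ} is a Lie subalgebra, and the map L_m ↦ x_m (for m ∈ pℤ), L_r ↦ I_r (for r ∉ pℤ) is a Lie algebra isomorphism from g' onto this subalgebra. -/
open Finsupp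

-- Structure constants of the centerless Heisenberg–Virasoro algebra on the basis
-- `{x_m : m ∈ ℤ} ∪ {I_r : r ∈ ℤ}` (`x_m = Sum.inl m`, `I_r = Sum.inr r`):
-- `[x_m,x_n] = (n-m)x_{m+n}`, `[x_m,I_r] = r I_{m+r}`, `[I_r,I_s] = 0`.
noncomputable def hvB (x y : ℤ ⊕ ℤ) : (ℤ ⊕ ℤ) →₀ ℂ :=
  match x, y with
  | Sum.inl m, Sum.inl n => (n - m : ℂ) • Finsupp.single (Sum.inl (m + n)) 1
  | Sum.inl m, Sum.inr r => (r : ℂ) • Finsupp.single (Sum.inr (m + r)) 1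
  | Sum.inr r, Sum.inl m => (-(r : ℂ)) • Finsupp.single (Sum.inr (m + r)) 1
  | Sum.inr _, Sum.inr _ => 0

-- The map `L_m ↦ x_m` for `m ∈ pℤ`, `L_r ↦ I_r` for `r ∉ pℤ`, on basis elements.
open Classical in
noncomputable def wMap (p : ℕ) (m : ℤ) : (ℤ ⊕ ℤ) →₀ ℂ :=
  if (p : ℤ) ∣ m then Finsupp.single (Sum.inl m) 1 else Finsupp.single (Sum.inr m) 1

-- The subspace of the centerless Heisenberg–Virasoro algebra spanned by
-- `{x_m : m ∈ pℤ} ∪ {I_r : r ∉ pℤ}`.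
noncomputable def hvSub (p : ℕ) : Submodule ℂ ((ℤ ⊕ ℤ) →₀ ℂ) :=
  Submodule.span ℂ
    (((fun m : ℤ => (Finsupp.single (Sum.inl m) (1 : ℂ) : (ℤ ⊕ ℤ) →₀ ℂ)) ''
        {m : ℤ | (p : ℤ) ∣ m})
      ∪ ((fun r : ℤ => (Finsupp.single (Sum.inr r) (1 : ℂ) : (ℤ ⊕ ℤ) →₀ ℂ)) ''
        {r : ℤ | ¬ (p : ℤ) ∣ r}))

lemma bilinExt_smul_left {B C : Type} (b : B → B → (C →₀ ℂ)) (a : ℂ) (x y : B →₀ ℂ) :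
    bilinExt b (a • x) y = a • bilinExt b x y := by
  unfold bilinExt
  rw [Finsupp.sum_smul_index', Finsupp.smul_sum]
  · apply Finsupp.sum_congr
    intro m _
    rw [Finsupp.smul_sum]
    apply Finsupp.sum_congr
    intro n _
    rw [smul_smul, smul_eq_mul, mul_assoc]
  · intro m; simp

lemma bilinExt_smul_right {B C : Type} (b : B → B → (C →₀ ℂ)) (a : ℂ) (x y : B →₀ ℂ) :
    bilinExt b x (a • y) = a • bilinExt b x y := by
  unfold bilinExt
  rw [Finsupp.smul_sum]
  apply Finsupp.sum_congr
  intro m _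
  rw [Finsupp.sum_smul_index', Finsupp.smul_sum]
  · apply Finsupp.sum_congr
    intro n _
    rw [smul_smul, smul_eq_mul, mul_left_comm]
  · intro n; simp

lemma wMap_key (p : ℕ) (m n : ℤ) :
    bilinExt hvB (wMap p m) (wMap p n)
      = Finsupp.linearCombination ℂ (wMap p) (wittB p m n) := by
  by_cases hm : (p : ℤ) ∣ m <;> by_cases hn : (p : ℤ) ∣ n
  · have hmn : (p : ℤ) ∣ m + n := dvd_add hm hn
    rw [wMap, wMap, if_pos hm, if_pos hn, bilinExt_single_single, wittB,
      if_pos ⟨hm, hn⟩, map_smul, Finsupp.linearCombination_single, one_smul, wMap,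
      if_pos hmn, one_mul, one_smul]
    simp [hvB]
  · have hmn : ¬ (p : ℤ) ∣ m + n := fun h => hn (by
      have := dvd_sub h hm; simpa using this)
    rw [wMap, wMap, if_pos hm, if_neg hn, bilinExt_single_single, wittB,
      if_neg (by tauto), if_pos hm, map_smul, Finsupp.linearCombination_single, one_smul,
      wMap, if_neg hmn, one_mul, one_smul]
    simp [hvB]
  · have hmn : ¬ (p : ℤ) ∣ m + n := fun h => hm (by
      have := dvd_sub h hn; simpa using this)
    rw [wMap, wMap, if_neg hm, if_pos hn, bilinExt_single_single, wittB,
      if_neg (by tauto), if_neg hm, if_pos hn, map_smul, Finsupp.linearCombination_single,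
      one_smul, wMap, if_neg hmn, one_mul, one_smul]
    simp [hvB, add_comm]
  · rw [wMap, wMap, if_neg hm, if_neg hn, bilinExt_single_single, wittB,
      if_neg (by tauto), if_neg hm, if_neg hn, map_zero]
    simp [hvB]

lemma wMap_compat (p : ℕ) (u v : ℤ →₀ ℂ) :
    bilinExt hvB (Finsupp.linearCombination ℂ (wMap p) u)
        (Finsupp.linearCombination ℂ (wMap p) v)
      = Finsupp.linearCombination ℂ (wMap p) (bilinExt (wittB p) u v) := by
  induction u using Finsupp.induction_linear with
  | zero => rw [map_zero, bilinExt_zero_left, bilinExt_zero_left, map_zero]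
  | add f g hf hg =>
      rw [map_add, bilinExt_add_left, bilinExt_add_left, hf, hg, map_add]
  | single m a =>
      induction v using Finsupp.induction_linear with
      | zero => rw [map_zero, bilinExt_zero_right, bilinExt_zero_right, map_zero]
      | add f g hf hg =>
          rw [map_add, bilinExt_add_right, bilinExt_add_right, hf, hg, map_add]
      | single n c =>
          rw [Finsupp.linearCombination_single, Finsupp.linearCombination_single,
            bilinExt_smul_left, bilinExt_smul_right, bilinExt_single_single, map_smul,
            ← wMap_key, smul_smul]

lemma wMap_leftInv (p : ℕ) (f : ℤ →₀ ℂ) :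
    Finsupp.lmapDomain ℂ ℂ (Sum.elim id id)
      (Finsupp.linearCombination ℂ (wMap p) f) = f := by
  induction f using Finsupp.induction_linear with
  | zero => simp
  | add f g hf hg => rw [map_add, map_add, hf, hg]
  | single m a =>
      rw [Finsupp.linearCombination_single, map_smul, Finsupp.lmapDomain_apply]
      unfold wMap
      by_cases h : (p : ℤ) ∣ m
      · rw [if_pos h, Finsupp.mapDomain_single, Finsupp.smul_single, smul_eq_mul, mul_one]
        simp only [Sum.elim_inl, id_eq]
      · rw [if_neg h, Finsupp.mapDomain_single, Finsupp.smul_single, smul_eq_mul, mul_one]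
        simp only [Sum.elim_inr, id_eq]

lemma wMap_range (p : ℕ) :
    LinearMap.range (Finsupp.linearCombination ℂ (wMap p)) = hvSub p := by
  rw [Finsupp.range_linearCombination]
  unfold hvSub
  congr 1
  ext w
  simp only [Set.mem_range, Set.mem_union, Set.mem_image, Set.mem_setOf_eq]
  constructor
  · rintro ⟨m, rfl⟩
    by_cases h : (p : ℤ) ∣ m
    · exact Or.inl ⟨m, h, by rw [wMap, if_pos h]⟩
    · exact Or.inr ⟨m, h, by rw [wMap, if_neg h]⟩
  · rintro (⟨m, h, rfl⟩ | ⟨r, h, rfl⟩)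
    · exact ⟨m, by rw [wMap, if_pos h]⟩
    · exact ⟨r, by rw [wMap, if_neg h]⟩

/-- The subspace spanned by `{x_m : m ∈ pℤ} ∪ {I_r : r ∉ pℤ}` is a Lie subalgebra of the
centerless Heisenberg–Virasoro algebra, and `L_m ↦ x_m`, `L_r ↦ I_r` is a Lie algebra
isomorphism from `g'` onto it. -/
theorem stmt_4 (p : ℕ) (hp : 1 < p) :
    (∀ u ∈ hvSub p, ∀ v ∈ hvSub p, bilinExt hvB u v ∈ hvSub p) ∧
    Function.Injective (Finsupp.linearCombination ℂ (wMap p)) ∧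
    LinearMap.range (Finsupp.linearCombination ℂ (wMap p)) = hvSub p ∧
    (∀ u v : ℤ →₀ ℂ,
      bilinExt hvB (Finsupp.linearCombination ℂ (wMap p) u)
          (Finsupp.linearCombination ℂ (wMap p) v)
        = Finsupp.linearCombination ℂ (wMap p) (bilinExt (wittB p) u v)) := by
  refine ⟨?_, ?_, wMap_range p, wMap_compat p⟩
  · intro u hu v hv
    rw [← wMap_range p] at hu hv
    obtain ⟨u', rfl⟩ := hu
    obtain ⟨v', rfl⟩ := hv
    rw [wMap_compat]
    rw [← wMap_range p]
    exact LinearMap.mem_range_self _ _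
  · exact Function.LeftInverse.injective (g := Finsupp.lmapDomain ℂ ℂ (Sum.elim id id))
      (wMap_leftInv p)
end

section
/- Let V be a nontrivial ℤ-graded module over an infinite-dimensional Heisenberg Lie algebra on which a central element acts as a nonzero scalar. Then the dimensions of the homogeneous components of V are unbounded. -/
set_option linter.unusedSectionVars false
set_option linter.unusedTactic false
set_option maxHeartbeats 2000000
set_option synthInstance.maxHeartbeats 400000

namespace Stmt7Aux

variable {V : Type} [AddCommGroup V] [Module ℂ V]

/-- if `y*x = x*y + 1` then `y * x^n = x^n * y + n • x^(n-1)` -/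
lemma weyl_pow (x y : Module.End ℂ V) (h : y * x = x * y + 1) (n : ℕ) :
    y * x ^ n = x ^ n * y + (n : ℂ) • x ^ (n - 1) := by
  induction n with
  | zero => simp
  | succ n ih =>
    have hx : (n : ℂ) • x ^ (n - 1) * x = (n : ℂ) • x ^ n := by
      cases n with
      | zero => simp
      | succ k =>
        rw [Nat.succ_sub_one, smul_mul_assoc, ← pow_succ]
    calc y * x ^ (n+1) = (y * x ^ n) * x := by rw [pow_succ, mul_assoc]
      _ = (x ^ n * y + (n : ℂ) • x ^ (n - 1)) * x := by rw [ih]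
      _ = x ^ n * (y * x) + (n : ℂ) • x ^ (n-1) * x := by rw [add_mul, mul_assoc]
      _ = x ^ n * (x * y) + x ^ n + (n : ℂ) • x ^ n := by rw [h, mul_add, mul_one, hx, add_assoc]
      _ = x ^ (n+1) * y + ((n:ℂ) + 1) • x ^ n := by
          rw [← mul_assoc, ← pow_succ]
          rw [add_smul, one_smul]
          abel
      _ = x ^ (n+1) * y + ((n+1 : ℕ) : ℂ) • x ^ ((n+1) - 1) := by push_cast; simp
lemma weyl_pow' (x y : Module.End ℂ V) (h : y * x = x * y + 1) (n : ℕ) :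
    x * y ^ n = y ^ n * x - (n : ℂ) • y ^ (n - 1) := by
  induction n with
  | zero => simp
  | succ n ih =>
    have hx : (n : ℂ) • y ^ (n - 1) * y = (n : ℂ) • y ^ n := by
      cases n with
      | zero => simp
      | succ k =>
        rw [Nat.succ_sub_one, smul_mul_assoc, ← pow_succ]
    have h' : x * y = y * x - 1 := by rw [h]; abel
    calc x * y ^ (n+1) = (x * y ^ n) * y := by rw [pow_succ, mul_assoc]
      _ = (y ^ n * x - (n : ℂ) • y ^ (n - 1)) * y := by rw [ih]
      _ = y ^ n * (x * y) - (n : ℂ) • y ^ (n-1) * y := by rw [sub_mul, mul_assoc]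
      _ = y ^ n * (y * x) - y ^ n - (n : ℂ) • y ^ n := by
          rw [h', mul_sub, mul_one, hx, sub_sub]
      _ = y ^ (n+1) * x - ((n:ℂ) + 1) • y ^ n := by
          rw [← mul_assoc, ← pow_succ, add_smul, one_smul]
          abel
      _ = y ^ (n+1) * x - ((n+1 : ℕ) : ℂ) • y ^ ((n+1) - 1) := by push_cast; simp


def deg (α : Fin 4 → ℕ) : ℕ := ∑ i, α i
def T (m : ℕ) : Finset (Fin 4 → ℕ) :=
  (Fintype.piFinset fun _ => Finset.range (m+1)).filter fun f => deg f ≤ m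
lemma mem_T {m : ℕ} {α : Fin 4 → ℕ} : α ∈ T m ↔ deg α ≤ m := by
  constructor
  · intro h; exact (Finset.mem_filter.1 h).2
  · intro h
    refine Finset.mem_filter.2 ⟨Fintype.mem_piFinset.2 fun i => ?_, h⟩
    refine Finset.mem_range.2 (lt_of_le_of_lt ?_ (Nat.lt_succ_of_le h))
    exact Finset.single_le_sum (f := α) (fun j _ => Nat.zero_le _) (Finset.mem_univ i)

def up (i : Fin 4) (α : Fin 4 → ℕ) : Fin 4 → ℕ := Function.update α i (α i + 1)
def dn (i : Fin 4) (α : Fin 4 → ℕ) : Fin 4 → ℕ := Function.update α i (α i - 1)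
lemma up_apply_self (i : Fin 4) (α : Fin 4 → ℕ) : up i α i = α i + 1 := by simp [up]
lemma dn_apply_self (i : Fin 4) (α : Fin 4 → ℕ) : dn i α i = α i - 1 := by simp [dn]
lemma up_apply_ne (i j : Fin 4) (α : Fin 4 → ℕ) (h : j ≠ i) : up i α j = α j := by
  simp [up, Function.update_of_ne h]
lemma dn_apply_ne (i j : Fin 4) (α : Fin 4 → ℕ) (h : j ≠ i) : dn i α j = α j := by
  simp [dn, Function.update_of_ne h]

lemma deg_up (i : Fin 4) (α : Fin 4 → ℕ) : deg (up i α) = deg α + 1 := by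
  unfold deg up
  rw [Finset.sum_update_of_mem (Finset.mem_univ i)]
  rw [← Finset.sum_compl_add_sum {i} α]
  simp [Finset.compl_eq_univ_sdiff]
  omega

lemma deg_dn (i : Fin 4) (α : Fin 4 → ℕ) (h : 1 ≤ α i) : deg (dn i α) + 1 = deg α := by
  unfold deg dn
  rw [Finset.sum_update_of_mem (Finset.mem_univ i)]
  rw [← Finset.sum_compl_add_sum {i} α]
  simp [Finset.compl_eq_univ_sdiff]
  omega

lemma deg_dn_le (i : Fin 4) (α : Fin 4 → ℕ) : deg (dn i α) ≤ deg α := by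
  refine Finset.sum_le_sum fun j _ => ?_
  by_cases hj : j = i
  · subst hj; rw [dn_apply_self]; omega
  · rw [dn_apply_ne i j α hj]

lemma up_dn (i : Fin 4) (α : Fin 4 → ℕ) (h : 1 ≤ α i) : up i (dn i α) = α := by
  funext j
  by_cases hj : j = i
  · subst hj; simp [up, dn]; omega
  · simp [up, dn, Function.update_of_ne hj]

lemma dn_up (i : Fin 4) (α : Fin 4 → ℕ) : dn i (up i α) = α := by
  funext j
  by_cases hj : j = i
  · subst hj; simp [up, dn]
  · simp [up, dn, Function.update_of_ne hj]

lemma deg_eq_zero {α : Fin 4 → ℕ} (h : deg α = 0) : α = fun _ => 0 := by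
  funext j
  have := Finset.sum_eq_zero_iff.1 h j (Finset.mem_univ j)
  simpa using this


variable (X1 X2 D1 D2 : Module.End ℂ V)
def Mo (α : Fin 4 → ℕ) : Module.End ℂ V := X1 ^ α 0 * X2 ^ α 1 * D1 ^ α 2 * D2 ^ α 3
variable {X1 X2 D1 D2}
variable (h1 : D1 * X1 = X1 * D1 + 1) (h2 : D2 * X2 = X2 * D2 + 1)
  (c12 : X1 * X2 = X2 * X1) (cD : D1 * D2 = D2 * D1)
  (c1D2 : X1 * D2 = D2 * X1) (c2D1 : X2 * D1 = D1 * X2)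

section
include h1 h2 c12 cD c1D2 c2D1

lemma Mo_up0 (α : Fin 4 → ℕ) : Mo X1 X2 D1 D2 (up 0 α) = X1 * Mo X1 X2 D1 D2 α := by
  have e0 : up 0 α 0 = α 0 + 1 := up_apply_self 0 α
  have e1 : up 0 α 1 = α 1 := up_apply_ne 0 1 α (by decide)
  have e2 : up 0 α 2 = α 2 := up_apply_ne 0 2 α (by decide)
  have e3 : up 0 α 3 = α 3 := up_apply_ne 0 3 α (by decide)
  simp only [Mo, e0, e1, e2, e3, pow_succ']
  simp only [mul_assoc]

lemma Mo_up1 (α : Fin 4 → ℕ) : Mo X1 X2 D1 D2 (up 1 α) = X2 * Mo X1 X2 D1 D2 α := by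
  have e0 : up 1 α 0 = α 0 := up_apply_ne 1 0 α (by decide)
  have e1 : up 1 α 1 = α 1 + 1 := up_apply_self 1 α
  have e2 : up 1 α 2 = α 2 := up_apply_ne 1 2 α (by decide)
  have e3 : up 1 α 3 = α 3 := up_apply_ne 1 3 α (by decide)
  have hc : X2 * X1 ^ α 0 = X1 ^ α 0 * X2 :=
    ((Commute.pow_right (Commute.symm c12) (α 0))).eq
  simp only [Mo, e0, e1, e2, e3, pow_succ']
  calc X1 ^ α 0 * (X2 * X2 ^ α 1) * D1 ^ α 2 * D2 ^ α 3
      = X1 ^ α 0 * X2 * X2 ^ α 1 * D1 ^ α 2 * D2 ^ α 3 := by simp only [mul_assoc]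
    _ = X2 * X1 ^ α 0 * X2 ^ α 1 * D1 ^ α 2 * D2 ^ α 3 := by rw [← hc]
    _ = X2 * (X1 ^ α 0 * X2 ^ α 1 * D1 ^ α 2 * D2 ^ α 3) := by simp only [mul_assoc]

lemma Mo_mul_D2 (α : Fin 4 → ℕ) : Mo X1 X2 D1 D2 α * D2 = Mo X1 X2 D1 D2 (up 3 α) := by
  have e0 : up 3 α 0 = α 0 := up_apply_ne 3 0 α (by decide)
  have e1 : up 3 α 1 = α 1 := up_apply_ne 3 1 α (by decide)
  have e2 : up 3 α 2 = α 2 := up_apply_ne 3 2 α (by decide)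
  have e3 : up 3 α 3 = α 3 + 1 := up_apply_self 3 α
  simp only [Mo, e0, e1, e2, e3, pow_succ]
  simp only [mul_assoc]

lemma Mo_mul_D1 (α : Fin 4 → ℕ) : Mo X1 X2 D1 D2 α * D1 = Mo X1 X2 D1 D2 (up 2 α) := by
  have e0 : up 2 α 0 = α 0 := up_apply_ne 2 0 α (by decide)
  have e1 : up 2 α 1 = α 1 := up_apply_ne 2 1 α (by decide)
  have e2 : up 2 α 2 = α 2 + 1 := up_apply_self 2 α
  have e3 : up 2 α 3 = α 3 := up_apply_ne 2 3 α (by decide)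
  have hc : D2 ^ α 3 * D1 = D1 * D2 ^ α 3 :=
    ((Commute.pow_left (Commute.symm cD) (α 3))).eq
  simp only [Mo, e0, e1, e2, e3, pow_succ]
  calc X1 ^ α 0 * X2 ^ α 1 * D1 ^ α 2 * D2 ^ α 3 * D1
      = X1 ^ α 0 * X2 ^ α 1 * D1 ^ α 2 * (D2 ^ α 3 * D1) := by simp only [mul_assoc]
    _ = X1 ^ α 0 * X2 ^ α 1 * D1 ^ α 2 * (D1 * D2 ^ α 3) := by rw [hc]
    _ = X1 ^ α 0 * X2 ^ α 1 * (D1 ^ α 2 * D1) * D2 ^ α 3 := by simp only [mul_assoc]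


lemma D1_mul_Mo (α : Fin 4 → ℕ) :
    D1 * Mo X1 X2 D1 D2 α = Mo X1 X2 D1 D2 (up 2 α) + (α 0 : ℂ) • Mo X1 X2 D1 D2 (dn 0 α) := by
  have e0 : up 2 α 0 = α 0 := up_apply_ne 2 0 α (by decide)
  have e1 : up 2 α 1 = α 1 := up_apply_ne 2 1 α (by decide)
  have e2 : up 2 α 2 = α 2 + 1 := up_apply_self 2 α
  have e3 : up 2 α 3 = α 3 := up_apply_ne 2 3 α (by decide)
  have f0 : dn 0 α 0 = α 0 - 1 := dn_apply_self 0 α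
  have f1 : dn 0 α 1 = α 1 := dn_apply_ne 0 1 α (by decide)
  have f2 : dn 0 α 2 = α 2 := dn_apply_ne 0 2 α (by decide)
  have f3 : dn 0 α 3 = α 3 := dn_apply_ne 0 3 α (by decide)
  have hw : D1 * X1 ^ α 0 = X1 ^ α 0 * D1 + (α 0 : ℂ) • X1 ^ (α 0 - 1) := weyl_pow X1 D1 h1 (α 0)
  have hc : D1 * X2 ^ α 1 = X2 ^ α 1 * D1 := ((Commute.symm c2D1).pow_right (α 1)).eq
  simp only [Mo, e0, e1, e2, e3, f0, f1, f2, f3, pow_succ']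
  calc D1 * (X1 ^ α 0 * X2 ^ α 1 * D1 ^ α 2 * D2 ^ α 3)
      = (D1 * X1 ^ α 0) * (X2 ^ α 1 * (D1 ^ α 2 * D2 ^ α 3)) := by simp only [mul_assoc]
    _ = (X1 ^ α 0 * D1 + (α 0 : ℂ) • X1 ^ (α 0 - 1)) * (X2 ^ α 1 * (D1 ^ α 2 * D2 ^ α 3)) := by
        rw [hw]
    _ = X1 ^ α 0 * ((D1 * X2 ^ α 1) * (D1 ^ α 2 * D2 ^ α 3))
        + (α 0 : ℂ) • (X1 ^ (α 0 - 1) * X2 ^ α 1 * D1 ^ α 2 * D2 ^ α 3) := by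
        rw [add_mul, smul_mul_assoc]; simp only [mul_assoc]
    _ = X1 ^ α 0 * ((X2 ^ α 1 * D1) * (D1 ^ α 2 * D2 ^ α 3))
        + (α 0 : ℂ) • (X1 ^ (α 0 - 1) * X2 ^ α 1 * D1 ^ α 2 * D2 ^ α 3) := by rw [hc]
    _ = X1 ^ α 0 * X2 ^ α 1 * (D1 * D1 ^ α 2) * D2 ^ α 3
        + (α 0 : ℂ) • (X1 ^ (α 0 - 1) * X2 ^ α 1 * D1 ^ α 2 * D2 ^ α 3) := by
        simp only [mul_assoc]

lemma D2_mul_Mo (α : Fin 4 → ℕ) :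
    D2 * Mo X1 X2 D1 D2 α = Mo X1 X2 D1 D2 (up 3 α) + (α 1 : ℂ) • Mo X1 X2 D1 D2 (dn 1 α) := by
  have e0 : up 3 α 0 = α 0 := up_apply_ne 3 0 α (by decide)
  have e1 : up 3 α 1 = α 1 := up_apply_ne 3 1 α (by decide)
  have e2 : up 3 α 2 = α 2 := up_apply_ne 3 2 α (by decide)
  have e3 : up 3 α 3 = α 3 + 1 := up_apply_self 3 α
  have f0 : dn 1 α 0 = α 0 := dn_apply_ne 1 0 α (by decide)
  have f1 : dn 1 α 1 = α 1 - 1 := dn_apply_self 1 α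
  have f2 : dn 1 α 2 = α 2 := dn_apply_ne 1 2 α (by decide)
  have f3 : dn 1 α 3 = α 3 := dn_apply_ne 1 3 α (by decide)
  have ha : D2 * X1 ^ α 0 = X1 ^ α 0 * D2 :=
    (((show Commute X1 D2 from c1D2).symm).pow_right (α 0)).eq
  have hw : D2 * X2 ^ α 1 = X2 ^ α 1 * D2 + (α 1 : ℂ) • X2 ^ (α 1 - 1) := weyl_pow X2 D2 h2 (α 1)
  have hc : D2 * D1 ^ α 2 = D1 ^ α 2 * D2 :=
    (((show Commute D1 D2 from cD).symm).pow_right (α 2)).eq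
  simp only [Mo, e0, e1, e2, e3, f0, f1, f2, f3, pow_succ', mul_assoc]
  calc D2 * (X1 ^ α 0 * (X2 ^ α 1 * (D1 ^ α 2 * D2 ^ α 3)))
      = (D2 * X1 ^ α 0) * (X2 ^ α 1 * (D1 ^ α 2 * D2 ^ α 3)) := by simp only [mul_assoc]
    _ = X1 ^ α 0 * ((D2 * X2 ^ α 1) * (D1 ^ α 2 * D2 ^ α 3)) := by
        rw [ha]; simp only [mul_assoc]
    _ = X1 ^ α 0 * ((X2 ^ α 1 * D2 + (α 1 : ℂ) • X2 ^ (α 1 - 1)) * (D1 ^ α 2 * D2 ^ α 3)) := by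
        rw [hw]
    _ = X1 ^ α 0 * (X2 ^ α 1 * ((D2 * D1 ^ α 2) * D2 ^ α 3))
        + (α 1 : ℂ) • (X1 ^ α 0 * (X2 ^ (α 1 - 1) * (D1 ^ α 2 * D2 ^ α 3))) := by
        rw [add_mul, smul_mul_assoc]
        simp only [mul_add, mul_smul_comm, mul_assoc]
    _ = X1 ^ α 0 * (X2 ^ α 1 * (D1 ^ α 2 * (D2 * D2 ^ α 3)))
        + (α 1 : ℂ) • (X1 ^ α 0 * (X2 ^ (α 1 - 1) * (D1 ^ α 2 * D2 ^ α 3))) := by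
        rw [hc]; simp only [mul_assoc]

lemma Mo_mul_X1 (α : Fin 4 → ℕ) :
    Mo X1 X2 D1 D2 α * X1 = Mo X1 X2 D1 D2 (up 0 α) + (α 2 : ℂ) • Mo X1 X2 D1 D2 (dn 2 α) := by
  have e0 : up 0 α 0 = α 0 + 1 := up_apply_self 0 α
  have e1 : up 0 α 1 = α 1 := up_apply_ne 0 1 α (by decide)
  have e2 : up 0 α 2 = α 2 := up_apply_ne 0 2 α (by decide)
  have e3 : up 0 α 3 = α 3 := up_apply_ne 0 3 α (by decide)
  have f0 : dn 2 α 0 = α 0 := dn_apply_ne 2 0 α (by decide)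
  have f1 : dn 2 α 1 = α 1 := dn_apply_ne 2 1 α (by decide)
  have f2 : dn 2 α 2 = α 2 - 1 := dn_apply_self 2 α
  have f3 : dn 2 α 3 = α 3 := dn_apply_ne 2 3 α (by decide)
  have hd : D2 ^ α 3 * X1 = X1 * D2 ^ α 3 :=
    (((show Commute X1 D2 from c1D2).symm).pow_left (α 3)).eq
  have hw : D1 ^ α 2 * X1 = X1 * D1 ^ α 2 + (α 2 : ℂ) • D1 ^ (α 2 - 1) := by
    rw [weyl_pow' X1 D1 h1 (α 2)]; abel
  have hb : X2 ^ α 1 * X1 = X1 * X2 ^ α 1 :=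
    (((show Commute X1 X2 from c12).symm).pow_left (α 1)).eq
  simp only [Mo, e0, e1, e2, e3, f0, f1, f2, f3, pow_succ, mul_assoc]
  calc X1 ^ α 0 * (X2 ^ α 1 * (D1 ^ α 2 * (D2 ^ α 3 * X1)))
      = X1 ^ α 0 * (X2 ^ α 1 * (D1 ^ α 2 * (X1 * D2 ^ α 3))) := by rw [hd]
    _ = X1 ^ α 0 * (X2 ^ α 1 * ((D1 ^ α 2 * X1) * D2 ^ α 3)) := by
        rw [← mul_assoc (D1 ^ α 2) X1 (D2 ^ α 3)]
    _ = X1 ^ α 0 * (X2 ^ α 1 * ((X1 * D1 ^ α 2 + (α 2 : ℂ) • D1 ^ (α 2 - 1)) * D2 ^ α 3)) := by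
        rw [hw]
    _ = X1 ^ α 0 * ((X2 ^ α 1 * X1) * (D1 ^ α 2 * D2 ^ α 3))
        + (α 2 : ℂ) • (X1 ^ α 0 * (X2 ^ α 1 * (D1 ^ (α 2 - 1) * D2 ^ α 3))) := by
        rw [add_mul, smul_mul_assoc]
        simp only [mul_add, mul_smul_comm, mul_assoc]
    _ = X1 ^ α 0 * (X1 * (X2 ^ α 1 * (D1 ^ α 2 * D2 ^ α 3)))
        + (α 2 : ℂ) • (X1 ^ α 0 * (X2 ^ α 1 * (D1 ^ (α 2 - 1) * D2 ^ α 3))) := by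
        rw [hb]; simp only [mul_assoc]

lemma Mo_mul_X2 (α : Fin 4 → ℕ) :
    Mo X1 X2 D1 D2 α * X2 = Mo X1 X2 D1 D2 (up 1 α) + (α 3 : ℂ) • Mo X1 X2 D1 D2 (dn 3 α) := by
  have e0 : up 1 α 0 = α 0 := up_apply_ne 1 0 α (by decide)
  have e1 : up 1 α 1 = α 1 + 1 := up_apply_self 1 α
  have e2 : up 1 α 2 = α 2 := up_apply_ne 1 2 α (by decide)
  have e3 : up 1 α 3 = α 3 := up_apply_ne 1 3 α (by decide)
  have f0 : dn 3 α 0 = α 0 := dn_apply_ne 3 0 α (by decide)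
  have f1 : dn 3 α 1 = α 1 := dn_apply_ne 3 1 α (by decide)
  have f2 : dn 3 α 2 = α 2 := dn_apply_ne 3 2 α (by decide)
  have f3 : dn 3 α 3 = α 3 - 1 := dn_apply_self 3 α
  have hw : D2 ^ α 3 * X2 = X2 * D2 ^ α 3 + (α 3 : ℂ) • D2 ^ (α 3 - 1) := by
    rw [weyl_pow' X2 D2 h2 (α 3)]; abel
  have hc : D1 ^ α 2 * X2 = X2 * D1 ^ α 2 :=
    ((show Commute X2 D1 from c2D1).symm.pow_left (α 2)).eq
  simp only [Mo, e0, e1, e2, e3, f0, f1, f2, f3, pow_succ, mul_assoc]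
  calc X1 ^ α 0 * (X2 ^ α 1 * (D1 ^ α 2 * (D2 ^ α 3 * X2)))
      = X1 ^ α 0 * (X2 ^ α 1 * (D1 ^ α 2 * (X2 * D2 ^ α 3 + (α 3 : ℂ) • D2 ^ (α 3 - 1)))) := by
        rw [hw]
    _ = X1 ^ α 0 * (X2 ^ α 1 * ((D1 ^ α 2 * X2) * D2 ^ α 3))
        + (α 3 : ℂ) • (X1 ^ α 0 * (X2 ^ α 1 * (D1 ^ α 2 * D2 ^ (α 3 - 1)))) := by
        simp only [mul_add, mul_smul_comm, mul_assoc]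
    _ = X1 ^ α 0 * (X2 ^ α 1 * (X2 * (D1 ^ α 2 * D2 ^ α 3)))
        + (α 3 : ℂ) • (X1 ^ α 0 * (X2 ^ α 1 * (D1 ^ α 2 * D2 ^ (α 3 - 1)))) := by
        rw [hc]; simp only [mul_assoc]

lemma comm_X1_Mo (α : Fin 4 → ℕ) :
    X1 * Mo X1 X2 D1 D2 α - Mo X1 X2 D1 D2 α * X1 = (-(α 2 : ℂ)) • Mo X1 X2 D1 D2 (dn 2 α) := by
  rw [Mo_mul_X1 h1 h2 c12 cD c1D2 c2D1 α, ← Mo_up0 h1 h2 c12 cD c1D2 c2D1 α, neg_smul]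
  abel

lemma comm_X2_Mo (α : Fin 4 → ℕ) :
    X2 * Mo X1 X2 D1 D2 α - Mo X1 X2 D1 D2 α * X2 = (-(α 3 : ℂ)) • Mo X1 X2 D1 D2 (dn 3 α) := by
  rw [Mo_mul_X2 h1 h2 c12 cD c1D2 c2D1 α, ← Mo_up1 h1 h2 c12 cD c1D2 c2D1 α, neg_smul]
  abel

lemma comm_D1_Mo (α : Fin 4 → ℕ) :
    D1 * Mo X1 X2 D1 D2 α - Mo X1 X2 D1 D2 α * D1 = ((α 0 : ℂ)) • Mo X1 X2 D1 D2 (dn 0 α) := by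
  rw [D1_mul_Mo h1 h2 c12 cD c1D2 c2D1 α, Mo_mul_D1 h1 h2 c12 cD c1D2 c2D1 α]
  abel

lemma comm_D2_Mo (α : Fin 4 → ℕ) :
    D2 * Mo X1 X2 D1 D2 α - Mo X1 X2 D1 D2 α * D2 = ((α 1 : ℂ)) • Mo X1 X2 D1 D2 (dn 1 α) := by
  rw [D2_mul_Mo h1 h2 c12 cD c1D2 c2D1 α, Mo_mul_D2 h1 h2 c12 cD c1D2 c2D1 α]
  abel


end

lemma Mo_zero : Mo X1 X2 D1 D2 (fun _ => 0) = 1 := by simp [Mo]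


/-- reindexing a sum over `T (m+1)` with a decrement against a sum over `T m` -/
lemma reindex (m : ℕ) (i : Fin 4) (F : (Fin 4 → ℕ) → Module.End ℂ V) (c : (Fin 4 → ℕ) → ℂ) :
    ∑ α ∈ T (m+1), ((α i : ℂ) * c α) • F (dn i α)
      = ∑ β ∈ T m, (((β i : ℂ) + 1) * c (up i β)) • F β := by
  rw [← Finset.sum_subset (Finset.filter_subset (fun α => 0 < α i) (T (m+1)))
      (by
        intro α hα hnα
        have : α i = 0 := by
          by_contra hne
          exact hnα (Finset.mem_filter.2 ⟨hα, Nat.pos_of_ne_zero hne⟩)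
        simp [this])]
  refine Finset.sum_nbij' (dn i) (up i) ?_ ?_ ?_ ?_ ?_
  · intro α hα
    obtain ⟨hα, hpos⟩ := Finset.mem_filter.1 hα
    have h1 := deg_dn i α hpos
    exact mem_T.2 (by have := mem_T.1 hα; omega)
  · intro β hβ
    refine Finset.mem_filter.2 ⟨mem_T.2 ?_, ?_⟩
    · rw [deg_up]; exact Nat.succ_le_succ (mem_T.1 hβ)
    · rw [up_apply_self]; omega
  · intro α hα
    exact up_dn i α (Finset.mem_filter.1 hα).2
  · intro β _
    exact dn_up i β
  · intro α hα
    obtain ⟨-, hpos⟩ := Finset.mem_filter.1 hα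
    have h1 : ((dn i α i : ℂ) + 1) = (α i : ℂ) := by
      rw [dn_apply_self, ← Nat.cast_succ, Nat.succ_eq_add_one, Nat.sub_add_cancel hpos]
    rw [up_dn i α hpos, h1]


section
include h1 h2 c12 cD c1D2 c2D1

theorem key (v : V) (hv : v ≠ 0) :
    ∀ (m : ℕ) (c : (Fin 4 → ℕ) → ℂ),
      (∀ α, ¬ deg α ≤ m → c α = 0) →
      (∀ β ∈ T m, (∑ α ∈ T m, c α • Mo X1 X2 D1 D2 α) (Mo X1 X2 D1 D2 β v) = 0) →
      ∀ α, c α = 0 := by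
  intro m
  induction m with
  | zero =>
    intro c hsupp hkill α
    by_cases hα : α = fun _ => 0
    · subst hα
      have h0T : (fun _ => 0 : Fin 4 → ℕ) ∈ T 0 := mem_T.2 (by simp [deg])
      have h := hkill _ h0T
      rw [Finset.sum_eq_single (fun _ => 0 : Fin 4 → ℕ)
          (fun b hb hne => absurd (deg_eq_zero (Nat.le_zero.1 (mem_T.1 hb))) hne)
          (fun h' => absurd h0T h'), Mo_zero] at h
      simp only [LinearMap.smul_apply, Module.End.one_apply] at h
      exact (smul_eq_zero.1 h).resolve_right hv
    · exact hsupp α fun hle => hα (deg_eq_zero (Nat.le_zero.1 hle))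
  | succ m ih =>
    intro c hsupp hkill
    have hBz : ∀ γ, deg γ ≤ m + 1 →
        (∑ α ∈ T (m+1), c α • Mo X1 X2 D1 D2 α) (Mo X1 X2 D1 D2 γ v) = 0 :=
      fun γ h => hkill γ (mem_T.2 h)
    -- direction D1 : knocks down coordinate 0
    have hop0 : D1 * (∑ α ∈ T (m+1), c α • Mo X1 X2 D1 D2 α)
        - (∑ α ∈ T (m+1), c α • Mo X1 X2 D1 D2 α) * D1
        = ∑ β ∈ T m, (((β 0 : ℂ) + 1) * c (up 0 β)) • Mo X1 X2 D1 D2 β := by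
      rw [Finset.mul_sum, Finset.sum_mul, ← Finset.sum_sub_distrib]
      refine Eq.trans (Finset.sum_congr rfl fun α _ => ?_)
        (reindex m 0 (Mo X1 X2 D1 D2) c)
      rw [mul_smul_comm, smul_mul_assoc, ← smul_sub, comm_D1_Mo h1 h2 c12 cD c1D2 c2D1 α,
        smul_smul, mul_comm (c α) ((α 0 : ℂ))]
    have hkill0 : ∀ β ∈ T m,
        (∑ α ∈ T m, (((α 0 : ℂ) + 1) * c (up 0 α)) • Mo X1 X2 D1 D2 α)
          (Mo X1 X2 D1 D2 β v) = 0 := by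
      intro β hβ
      have hβ1 : deg β ≤ m := mem_T.1 hβ
      rw [← hop0, LinearMap.sub_apply, Module.End.mul_apply, Module.End.mul_apply,
        hBz β (by omega), map_zero]
      have hD : D1 (Mo X1 X2 D1 D2 β v)
          = Mo X1 X2 D1 D2 (up 2 β) v + (β 0 : ℂ) • Mo X1 X2 D1 D2 (dn 0 β) v := by
        rw [← Module.End.mul_apply, D1_mul_Mo h1 h2 c12 cD c1D2 c2D1 β]
        simp
      rw [hD, map_add, map_smul, hBz (up 2 β) (by rw [deg_up]; omega),
        hBz (dn 0 β) (le_trans (deg_dn_le 0 β) (by omega))]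
      simp
    have hcup0 : ∀ β, c (up 0 β) = 0 := by
      intro β
      have h := ih (fun α => ((α 0 : ℂ) + 1) * c (up 0 α))
        (fun α hα => by
          show ((α 0 : ℂ) + 1) * c (up 0 α) = 0
          rw [hsupp (up 0 α) (by rw [deg_up]; omega), mul_zero]) hkill0 β
      rcases mul_eq_zero.1 h with h' | h'
      · exact absurd h' (Nat.cast_add_one_ne_zero (β 0))
      · exact h'
    -- direction D2 : knocks down coordinate 1
    have hop1 : D2 * (∑ α ∈ T (m+1), c α • Mo X1 X2 D1 D2 α)
        - (∑ α ∈ T (m+1), c α • Mo X1 X2 D1 D2 α) * D2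
        = ∑ β ∈ T m, (((β 1 : ℂ) + 1) * c (up 1 β)) • Mo X1 X2 D1 D2 β := by
      rw [Finset.mul_sum, Finset.sum_mul, ← Finset.sum_sub_distrib]
      refine Eq.trans (Finset.sum_congr rfl fun α _ => ?_)
        (reindex m 1 (Mo X1 X2 D1 D2) c)
      rw [mul_smul_comm, smul_mul_assoc, ← smul_sub, comm_D2_Mo h1 h2 c12 cD c1D2 c2D1 α,
        smul_smul, mul_comm (c α) ((α 1 : ℂ))]
    have hkill1 : ∀ β ∈ T m,
        (∑ α ∈ T m, (((α 1 : ℂ) + 1) * c (up 1 α)) • Mo X1 X2 D1 D2 α)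
          (Mo X1 X2 D1 D2 β v) = 0 := by
      intro β hβ
      have hβ1 : deg β ≤ m := mem_T.1 hβ
      rw [← hop1, LinearMap.sub_apply, Module.End.mul_apply, Module.End.mul_apply,
        hBz β (by omega), map_zero]
      have hD : D2 (Mo X1 X2 D1 D2 β v)
          = Mo X1 X2 D1 D2 (up 3 β) v + (β 1 : ℂ) • Mo X1 X2 D1 D2 (dn 1 β) v := by
        rw [← Module.End.mul_apply, D2_mul_Mo h1 h2 c12 cD c1D2 c2D1 β]
        simp
      rw [hD, map_add, map_smul, hBz (up 3 β) (by rw [deg_up]; omega),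
        hBz (dn 1 β) (le_trans (deg_dn_le 1 β) (by omega))]
      simp
    have hcup1 : ∀ β, c (up 1 β) = 0 := by
      intro β
      have h := ih (fun α => ((α 1 : ℂ) + 1) * c (up 1 α))
        (fun α hα => by
          show ((α 1 : ℂ) + 1) * c (up 1 α) = 0
          rw [hsupp (up 1 α) (by rw [deg_up]; omega), mul_zero]) hkill1 β
      rcases mul_eq_zero.1 h with h' | h'
      · exact absurd h' (Nat.cast_add_one_ne_zero (β 1))
      · exact h'
    -- direction X1 : knocks down coordinate 2
    have hop2 : X1 * (∑ α ∈ T (m+1), c α • Mo X1 X2 D1 D2 α)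
        - (∑ α ∈ T (m+1), c α • Mo X1 X2 D1 D2 α) * X1
        = ∑ β ∈ T m, (((β 2 : ℂ) + 1) * (- c (up 2 β))) • Mo X1 X2 D1 D2 β := by
      rw [Finset.mul_sum, Finset.sum_mul, ← Finset.sum_sub_distrib]
      refine Eq.trans (Finset.sum_congr rfl fun α _ => ?_)
        (reindex m 2 (Mo X1 X2 D1 D2) (fun α => - c α))
      rw [mul_smul_comm, smul_mul_assoc, ← smul_sub, comm_X1_Mo h1 h2 c12 cD c1D2 c2D1 α,
        smul_smul]
      congr 1
      ring
    have hkill2 : ∀ β ∈ T m,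
        (∑ α ∈ T m, (((α 2 : ℂ) + 1) * (- c (up 2 α))) • Mo X1 X2 D1 D2 α)
          (Mo X1 X2 D1 D2 β v) = 0 := by
      intro β hβ
      have hβ1 : deg β ≤ m := mem_T.1 hβ
      rw [← hop2, LinearMap.sub_apply, Module.End.mul_apply, Module.End.mul_apply,
        hBz β (by omega), map_zero]
      have hD : X1 (Mo X1 X2 D1 D2 β v) = Mo X1 X2 D1 D2 (up 0 β) v := by
        rw [← Module.End.mul_apply, ← Mo_up0 h1 h2 c12 cD c1D2 c2D1 β]
      rw [hD, hBz (up 0 β) (by rw [deg_up]; omega)]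
      simp
    have hcup2 : ∀ β, c (up 2 β) = 0 := by
      intro β
      have h := ih (fun α => ((α 2 : ℂ) + 1) * (- c (up 2 α)))
        (fun α hα => by
          show ((α 2 : ℂ) + 1) * (- c (up 2 α)) = 0
          rw [hsupp (up 2 α) (by rw [deg_up]; omega), neg_zero, mul_zero]) hkill2 β
      rcases mul_eq_zero.1 h with h' | h'
      · exact absurd h' (Nat.cast_add_one_ne_zero (β 2))
      · exact neg_eq_zero.1 h'
    -- direction X2 : knocks down coordinate 3
    have hop3 : X2 * (∑ α ∈ T (m+1), c α • Mo X1 X2 D1 D2 α)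
        - (∑ α ∈ T (m+1), c α • Mo X1 X2 D1 D2 α) * X2
        = ∑ β ∈ T m, (((β 3 : ℂ) + 1) * (- c (up 3 β))) • Mo X1 X2 D1 D2 β := by
      rw [Finset.mul_sum, Finset.sum_mul, ← Finset.sum_sub_distrib]
      refine Eq.trans (Finset.sum_congr rfl fun α _ => ?_)
        (reindex m 3 (Mo X1 X2 D1 D2) (fun α => - c α))
      rw [mul_smul_comm, smul_mul_assoc, ← smul_sub, comm_X2_Mo h1 h2 c12 cD c1D2 c2D1 α,
        smul_smul]
      congr 1
      ring
    have hkill3 : ∀ β ∈ T m,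
        (∑ α ∈ T m, (((α 3 : ℂ) + 1) * (- c (up 3 α))) • Mo X1 X2 D1 D2 α)
          (Mo X1 X2 D1 D2 β v) = 0 := by
      intro β hβ
      have hβ1 : deg β ≤ m := mem_T.1 hβ
      rw [← hop3, LinearMap.sub_apply, Module.End.mul_apply, Module.End.mul_apply,
        hBz β (by omega), map_zero]
      have hD : X2 (Mo X1 X2 D1 D2 β v) = Mo X1 X2 D1 D2 (up 1 β) v := by
        rw [← Module.End.mul_apply, ← Mo_up1 h1 h2 c12 cD c1D2 c2D1 β]
      rw [hD, hBz (up 1 β) (by rw [deg_up]; omega)]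
      simp
    have hcup3 : ∀ β, c (up 3 β) = 0 := by
      intro β
      have h := ih (fun α => ((α 3 : ℂ) + 1) * (- c (up 3 α)))
        (fun α hα => by
          show ((α 3 : ℂ) + 1) * (- c (up 3 α)) = 0
          rw [hsupp (up 3 α) (by rw [deg_up]; omega), neg_zero, mul_zero]) hkill3 β
      rcases mul_eq_zero.1 h with h' | h'
      · exact absurd h' (Nat.cast_add_one_ne_zero (β 3))
      · exact neg_eq_zero.1 h'
    -- conclude
    have hne : ∀ γ, γ ≠ (fun _ => 0) → c γ = 0 := by
      intro γ hγ
      obtain ⟨j, hj⟩ := Function.ne_iff.1 hγ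
      have hj' : 1 ≤ γ j := Nat.pos_of_ne_zero hj
      fin_cases j
      · have h := hcup0 (dn 0 γ); rwa [up_dn 0 γ hj'] at h
      · have h := hcup1 (dn 1 γ); rwa [up_dn 1 γ hj'] at h
      · have h := hcup2 (dn 2 γ); rwa [up_dn 2 γ hj'] at h
      · have h := hcup3 (dn 3 γ); rwa [up_dn 3 γ hj'] at h
    intro α
    by_cases hα : α = fun _ => 0
    · subst hα
      have h0T : (fun _ => 0 : Fin 4 → ℕ) ∈ T (m+1) := mem_T.2 (by simp [deg])
      have h := hkill _ h0T
      rw [Finset.sum_eq_single (fun _ => 0 : Fin 4 → ℕ)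
          (fun b hb hbne => by rw [hne b hbne, zero_smul])
          (fun h' => absurd h0T h'), Mo_zero] at h
      simp only [LinearMap.smul_apply, Module.End.one_apply] at h
      exact (smul_eq_zero.1 h).resolve_right hv
    · exact hne α hα

end

/-- finrank of a finite sup of submodules -/
lemma finrank_sup_le {ι : Type*} (s : Finset ι) (f : ι → Submodule ℂ V)
    [∀ i, FiniteDimensional ℂ (f i)] (N : ℕ) (h : ∀ i ∈ s, Module.finrank ℂ (f i) ≤ N) :
    Module.finrank ℂ ↥(s.sup f) ≤ s.card * N := by
  classical
  induction s using Finset.induction_on with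
  | empty => simp
  | insert _ _ hnotmem ih =>
    rename_i a s
    rw [Finset.sup_insert, Finset.card_insert_of_notMem hnotmem]
    refine le_trans (Submodule.finrank_add_le_finrank_add_finrank (f a) (s.sup f)) ?_
    have h1 := h a (Finset.mem_insert_self a s)
    have h2 := ih (fun i hi => h i (Finset.mem_insert_of_mem hi))
    calc Module.finrank ℂ ↥(f a) + Module.finrank ℂ ↥(s.sup f) ≤ N + s.card * N :=
          Nat.add_le_add h1 h2
      _ = (s.card + 1) * N := by ring

/-- grading of powers -/
lemma a_pow_mem (a : ℤ → Module.End ℂ V) (W : ℤ → Submodule ℂ V)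
    (hgr : ∀ (n k : ℤ), n ≠ 0 → ∀ v ∈ W k, a n v ∈ W (k + n))
    (n : ℤ) (hn : n ≠ 0) (j : ℕ) :
    ∀ (k : ℤ) (w : V), w ∈ W k → ((a n) ^ j) w ∈ W (k + j * n) := by
  induction j with
  | zero => intro k w hw; simpa using hw
  | succ j ih =>
    intro k w hw
    have h1 : ((a n) ^ (j+1)) w = a n (((a n) ^ j) w) := by
      rw [pow_succ', Module.End.mul_apply]
    rw [h1]
    have h2 := hgr n (k + j * n) hn _ (ih k w hw)
    have : (k + (j:ℤ) * n) + n = k + (j+1 : ℕ) * n := by push_cast; ring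
    rwa [this] at h2

lemma smul_a_pow_mem (a : ℤ → Module.End ℂ V) (W : ℤ → Submodule ℂ V)
    (hgr : ∀ (n k : ℤ), n ≠ 0 → ∀ v ∈ W k, a n v ∈ W (k + n))
    (s : ℂ) (n : ℤ) (hn : n ≠ 0) (j : ℕ) (k : ℤ) (w : V) (hw : w ∈ W k) :
    ((s • a n) ^ j) w ∈ W (k + j * n) := by
  rw [smul_pow, LinearMap.smul_apply]
  exact Submodule.smul_mem _ _ (a_pow_mem a W hgr n hn j k w hw)

def shift (α : Fin 4 → ℕ) : ℤ := (α 2 : ℤ) + 2*(α 3) - (α 0) - 2*(α 1)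

noncomputable def Ysup (W : ℤ → Submodule ℂ V) (k0 : ℤ) (r : ℕ) : Submodule ℂ V :=
  (Finset.Icc (-(2*(r:ℤ))) (2*(r:ℤ))).sup (fun j => W (k0 + j))

lemma mem_Ysup {W : ℤ → Submodule ℂ V} {k0 : ℤ} {r : ℕ} {j : ℤ} {w : V}
    (hj : -(2*(r:ℤ)) ≤ j ∧ j ≤ 2*(r:ℤ)) (hw : w ∈ W (k0 + j)) : w ∈ Ysup W k0 r :=
  Finset.le_sup (f := fun j => W (k0 + j)) (Finset.mem_Icc.2 hj) hw

lemma Ysup_fd (W : ℤ → Submodule ℂ V) (hfd : ∀ k, FiniteDimensional ℂ (W k)) (k0 : ℤ) (r : ℕ) :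
    FiniteDimensional ℂ (Ysup W k0 r) :=
  haveI : ∀ i : ℤ, FiniteDimensional ℂ (W (k0 + i)) := fun i => hfd (k0 + i)
  Submodule.finiteDimensional_finset_sup _ _

lemma Ysup_rank (W : ℤ → Submodule ℂ V) (hfd : ∀ k, FiniteDimensional ℂ (W k)) (N : ℕ)
    (hfr : ∀ k, Module.finrank ℂ (W k) ≤ N) (k0 : ℤ) (r : ℕ) :
    Module.finrank ℂ (Ysup W k0 r) ≤ (4*r+1) * N := by
  haveI : ∀ i : ℤ, FiniteDimensional ℂ (W (k0 + i)) := fun i => hfd (k0 + i)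
  have hcard : (Finset.Icc (-(2*(r:ℤ))) (2*(r:ℤ))).card = 4*r+1 := by
    rw [Int.card_Icc]; omega
  have h := finrank_sup_le (Finset.Icc (-(2*(r:ℤ))) (2*(r:ℤ))) (fun j => W (k0 + j)) N
    (fun i _ => hfr (k0 + i))
  rw [hcard] at h
  exact h

variable (X1 X2 D1 D2) in
def Bop (m : ℕ) (c : (Fin 4 → ℕ) → ℂ) : Module.End ℂ V :=
  ∑ α ∈ T m, c α • Mo X1 X2 D1 D2 α

def ext0 (m : ℕ) (cc : ↥(T m) → ℂ) : (Fin 4 → ℕ) → ℂ :=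
  fun α => if h : α ∈ T m then cc ⟨α, h⟩ else 0

lemma Bop_ext0_add (m : ℕ) (cc dd : ↥(T m) → ℂ) :
    Bop X1 X2 D1 D2 m (ext0 m (cc + dd))
      = Bop X1 X2 D1 D2 m (ext0 m cc) + Bop X1 X2 D1 D2 m (ext0 m dd) := by
  have h : ext0 m (cc + dd) = ext0 m cc + ext0 m dd := by
    funext α; by_cases hmem : α ∈ T m <;> simp [ext0, hmem]
  rw [h]
  simp only [Bop, Pi.add_apply, add_smul, Finset.sum_add_distrib]

lemma Bop_ext0_smul (m : ℕ) (r : ℂ) (cc : ↥(T m) → ℂ) :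
    Bop X1 X2 D1 D2 m (ext0 m (r • cc)) = r • Bop X1 X2 D1 D2 m (ext0 m cc) := by
  have h : ext0 m (r • cc) = r • ext0 m cc := by
    funext α; by_cases hmem : α ∈ T m <;> simp [ext0, hmem]
  rw [h]
  simp only [Bop, Pi.smul_apply, smul_smul, smul_eq_mul, Finset.smul_sum]

variable (X1 X2 D1 D2) in
def Phi (m : ℕ) (P Q : Submodule ℂ V)
    (hmap : ∀ (c : (Fin 4 → ℕ) → ℂ) (x : V), x ∈ P → Bop X1 X2 D1 D2 m c x ∈ Q) :
    (↥(T m) → ℂ) →ₗ[ℂ] (↥P →ₗ[ℂ] ↥Q) where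
  toFun cc := LinearMap.restrict (Bop X1 X2 D1 D2 m (ext0 m cc))
    (fun x hx => hmap (ext0 m cc) x hx)
  map_add' cc dd := by
    ext x
    simp [LinearMap.restrict_apply, Bop_ext0_add]
  map_smul' r cc := by
    ext x
    simp [LinearMap.restrict_apply, Bop_ext0_smul]

set_option synthInstance.maxHeartbeats 400000 in
/-- the final counting contradiction -/
theorem count (W : ℤ → Submodule ℂ V) (hfd : ∀ k, FiniteDimensional ℂ (W k)) (N : ℕ)
    (hfr : ∀ k, Module.finrank ℂ (W k) ≤ N)
    (h1 : D1 * X1 = X1 * D1 + 1) (h2 : D2 * X2 = X2 * D2 + 1)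
    (c12 : X1 * X2 = X2 * X1) (cD : D1 * D2 = D2 * D1)
    (c1D2 : X1 * D2 = D2 * X1) (c2D1 : X2 * D1 = D1 * X2)
    (k0 : ℤ) (v : V) (hv : v ≠ 0) (hvW : v ∈ W k0)
    (hMo_mem : ∀ (α : Fin 4 → ℕ) (k : ℤ) (w : V), w ∈ W k →
      Mo X1 X2 D1 D2 α w ∈ W (k + shift α)) : False := by
  classical
  obtain ⟨t, ht⟩ : ∃ t, t = 24 * (N + 1) := ⟨_, rfl⟩
  obtain ⟨m, hm⟩ : ∃ m, m = 4 * t := ⟨_, rfl⟩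
  have hYfd : ∀ r, FiniteDimensional ℂ (Ysup W k0 r) := fun r => Ysup_fd W hfd k0 r
  haveI : FiniteDimensional ℂ ↥(Ysup W k0 m) := hYfd m
  haveI : FiniteDimensional ℂ ↥(Ysup W k0 (2*m)) := hYfd (2*m)
  have hsum4 : ∀ β : Fin 4 → ℕ, deg β = β 0 + β 1 + β 2 + β 3 := by
    intro β; simp [deg, Fin.sum_univ_four]
  -- Bop maps Ysup m into Ysup (2m)
  have hBmap : ∀ (c : (Fin 4 → ℕ) → ℂ) (x : V), x ∈ Ysup W k0 m →
      Bop X1 X2 D1 D2 m c x ∈ Ysup W k0 (2*m) := by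
    intro c x hx
    have hle : Ysup W k0 m ≤ Submodule.comap (Bop X1 X2 D1 D2 m c) (Ysup W k0 (2*m)) := by
      refine Finset.sup_le ?_
      intro j hj w hw
      rw [Submodule.mem_comap]
      show (∑ α ∈ T m, c α • Mo X1 X2 D1 D2 α) w ∈ _
      rw [LinearMap.sum_apply]
      refine Submodule.sum_mem _ fun α hα => ?_
      rw [LinearMap.smul_apply]
      refine Submodule.smul_mem _ _ ?_
      have hmem := hMo_mem α (k0 + j) w hw
      have hj' := Finset.mem_Icc.1 hj
      have hdeg := mem_T.1 hα
      have hsum := hsum4 α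
      have hidx : (k0 + j) + shift α = k0 + (j + shift α) := by ring
      rw [hidx] at hmem
      refine mem_Ysup ?_ hmem
      unfold shift
      push_cast
      constructor <;> omega
    exact Submodule.mem_comap.1 (hle hx)
  have hTY : ∀ β ∈ T m, Mo X1 X2 D1 D2 β v ∈ Ysup W k0 m := by
    intro β hβ
    have hmem := hMo_mem β k0 v hvW
    have hdeg := mem_T.1 hβ
    have hsum := hsum4 β
    refine mem_Ysup ?_ hmem
    unfold shift
    push_cast
    constructor <;> omega
  -- the injective linear map
  set Φ := Phi X1 X2 D1 D2 m (Ysup W k0 m) (Ysup W k0 (2*m)) hBmap with hΦ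
  have hΦ0 : ∀ cc, Φ cc = 0 → cc = 0 := by
    intro cc h0
    have hkillall : ∀ β ∈ T m,
        (∑ α ∈ T m, ext0 m cc α • Mo X1 X2 D1 D2 α) (Mo X1 X2 D1 D2 β v) = 0 := by
      intro β hβ
      have hx : Mo X1 X2 D1 D2 β v ∈ Ysup W k0 m := hTY β hβ
      have hh1 := LinearMap.ext_iff.1 h0 ⟨Mo X1 X2 D1 D2 β v, hx⟩
      have hh2 := congrArg Subtype.val hh1
      simpa [hΦ, Phi, LinearMap.restrict_apply, Bop] using hh2
    have hkey := key h1 h2 c12 cD c1D2 c2D1 v hv m (ext0 m cc)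
      (fun α hα => by
        simp only [ext0]
        rw [dif_neg (fun hmem => hα (mem_T.1 hmem))]) hkillall
    funext x
    have h3 := hkey x.1
    simp only [ext0] at h3
    rw [dif_pos x.2] at h3
    simpa using h3
  have hΦinj : Function.Injective Φ := (injective_iff_map_eq_zero Φ).2 hΦ0
  -- counting
  have hcard1 : (t+1)^4 ≤ (T m).card := by
    have hsub : (Fintype.piFinset fun _ : Fin 4 => Finset.range (t+1)) ⊆ T m := by
      intro f hf
      have hcoord : ∀ i, f i ≤ t := by
        intro i
        have h := Fintype.mem_piFinset.1 hf i
        rw [Finset.mem_range] at h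
        omega
      refine mem_T.2 ?_
      rw [hsum4 f]
      have := hcoord 0; have := hcoord 1; have := hcoord 2; have := hcoord 3
      omega
    calc (t+1)^4 = (Fintype.piFinset fun _ : Fin 4 => Finset.range (t+1)).card := by
          rw [Fintype.card_piFinset_const, Finset.card_range]
      _ ≤ (T m).card := Finset.card_le_card hsub
  have hrank1 : Module.finrank ℂ (↥(T m) → ℂ) = (T m).card := by
    rw [Module.finrank_pi, Fintype.card_coe]
  have hrank2 : Module.finrank ℂ (↥(Ysup W k0 m) →ₗ[ℂ] ↥(Ysup W k0 (2*m)))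
      = Module.finrank ℂ (Ysup W k0 m) * Module.finrank ℂ (Ysup W k0 (2*m)) :=
    Module.finrank_linearMap ℂ ℂ ↥(Ysup W k0 m) ↥(Ysup W k0 (2*m))
  have hle2 : Module.finrank ℂ (↥(T m) → ℂ)
      ≤ Module.finrank ℂ (↥(Ysup W k0 m) →ₗ[ℂ] ↥(Ysup W k0 (2*m))) :=
    LinearMap.finrank_le_finrank_of_injective hΦinj
  have hfinal : (t+1)^4 ≤ ((4*m+1) * N) * ((4*(2*m)+1) * N) := by
    calc (t+1)^4 ≤ (T m).card := hcard1
      _ = Module.finrank ℂ (↥(T m) → ℂ) := hrank1.symm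
      _ ≤ Module.finrank ℂ (↥(Ysup W k0 m) →ₗ[ℂ] ↥(Ysup W k0 (2*m))) := hle2
      _ = Module.finrank ℂ (Ysup W k0 m) * Module.finrank ℂ (Ysup W k0 (2*m)) := hrank2
      _ ≤ ((4*m+1) * N) * ((4*(2*m)+1) * N) :=
          Nat.mul_le_mul (Ysup_rank W hfd N hfr k0 m) (Ysup_rank W hfd N hfr k0 (2*m))
  -- numeric contradiction
  have h24 : t = 24*N + 24 := by omega

  have hb1 : (4*m+1) * N ≤ 17*t*N := Nat.mul_le_mul_right N (by omega)
  have hb2 : (4*(2*m)+1) * N ≤ 33*t*N := Nat.mul_le_mul_right N (by omega)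
  have hb3 : (t+1)^4 ≤ (17*t*N) * (33*t*N) :=
    le_trans hfinal (Nat.mul_le_mul hb1 hb2)
  have hb4 : (17*t*N) * (33*t*N) = 561*(N*N)*(t*t) := by ring
  have hb5 : 576*(N*N) ≤ t*t := by
    rw [h24]
    calc 576*(N*N) ≤ 576*(N*N) + (1152*N + 576) := Nat.le_add_right _ _
      _ = (24*N+24)*(24*N+24) := by ring
  have hb6 : 561*(N*N)*(t*t) < (t*t)*(t*t) := by
    have htpos : 0 < t := by omega
    have htt : 0 < t*t := Nat.mul_pos htpos htpos
    rcases Nat.eq_zero_or_pos N with hN | hN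
    · calc 561*(N*N)*(t*t) = 0 := by rw [hN]; ring
        _ < (t*t)*(t*t) := Nat.mul_pos htt htt
    · have hNN : 0 < N*N := Nat.mul_pos hN hN
      have h561 : 561*(N*N) < 576*(N*N) := by
        exact Nat.mul_lt_mul_of_lt_of_le (by norm_num) (le_refl (N*N)) hNN
      calc 561*(N*N)*(t*t) < 576*(N*N)*(t*t) := mul_lt_mul_of_pos_right h561 htt
        _ ≤ (t*t)*(t*t) := Nat.mul_le_mul_right _ hb5
  have hb7 : (t*t)*(t*t) ≤ (t+1)^4 := by
    have e1 : (t*t)*(t*t) = t^4 := by ring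
    rw [e1]
    exact Nat.pow_le_pow_left (by omega) 4
  omega



end Stmt7Aux

open Stmt7Aux in
/-- Let `V` be a nontrivial ℤ-graded module over the infinite-dimensional Heisenberg algebra
(with basis `{a_n : n ≠ 0} ∪ {c}`, `[a_m,a_n] = m δ_{m+n,0} c`, `c` central) on which the
central element `c` acts as a nonzero scalar `μ`.  Then the dimensions of the homogeneous
components of `V` are unbounded. -/
theorem stmt_7 (V : Type) [AddCommGroup V] [Module ℂ V] [Nontrivial V]
    (a : ℤ → Module.End ℂ V) (μ : ℂ) (hμ : μ ≠ 0)
    (hcomm : ∀ m n : ℤ, m ≠ 0 → n ≠ 0 →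
      a m * a n - a n * a m
        = if m + n = 0 then ((m : ℂ) * μ) • (1 : Module.End ℂ V) else 0)
    (W : ℤ → Submodule ℂ V) (hW : DirectSum.IsInternal W)
    (hgr : ∀ (n k : ℤ), n ≠ 0 → ∀ v ∈ W k, a n v ∈ W (k + n)) :
    ∀ N : ℕ, ∃ k : ℤ, (N : Cardinal) < Module.rank ℂ ↥(W k) := by
  classical
  intro N
  by_contra hcon
  push_neg at hcon
  have hfd : ∀ k, FiniteDimensional ℂ (W k) := fun k =>
    Module.rank_lt_aleph0_iff.1 (lt_of_le_of_lt (hcon k) (Cardinal.nat_lt_aleph0 N))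
  have hfr : ∀ k, Module.finrank ℂ (W k) ≤ N := fun k =>
    Module.finrank_le_of_rank_le (hcon k)
  obtain ⟨k0, v, hvW, hv⟩ : ∃ (k0 : ℤ) (v : V), v ∈ W k0 ∧ v ≠ 0 := by
    by_contra hno
    push_neg at hno
    have hbot : ∀ k, W k = ⊥ := by
      intro k
      rw [Submodule.eq_bot_iff]
      exact fun x hx => hno k x hx
    have htop := hW.submodule_iSup_eq_top
    rw [iSup_eq_bot.2 hbot] at htop
    obtain ⟨x, hx⟩ := exists_ne (0 : V)
    have hx2 : x ∈ (⊥ : Submodule ℂ V) := htop ▸ Submodule.mem_top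
    exact hx ((Submodule.mem_bot ℂ).1 hx2)
  set X1 : Module.End ℂ V := a (-1) with hX1
  set X2 : Module.End ℂ V := a (-2) with hX2
  set D1 : Module.End ℂ V := μ⁻¹ • a 1 with hD1
  set D2 : Module.End ℂ V := (2*μ)⁻¹ • a 2 with hD2
  have h1 : D1 * X1 = X1 * D1 + 1 := by
    have r1 := hcomm 1 (-1) one_ne_zero (by norm_num)
    rw [if_pos (by norm_num)] at r1
    have e : a 1 * a (-1) = a (-1) * a 1 + (((1:ℤ) : ℂ) * μ) • 1 := by
      rw [← r1]; abel
    rw [hD1, hX1, smul_mul_assoc, e, smul_add, mul_smul_comm, smul_smul]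
    congr 1
    rw [show ((1:ℤ):ℂ) = 1 by norm_num, one_mul, inv_mul_cancel₀ hμ, one_smul]
  have h2 : D2 * X2 = X2 * D2 + 1 := by
    have r1 := hcomm 2 (-2) two_ne_zero (by norm_num)
    rw [if_pos (by norm_num)] at r1
    have e : a 2 * a (-2) = a (-2) * a 2 + (((2:ℤ) : ℂ) * μ) • 1 := by
      rw [← r1]; abel
    rw [hD2, hX2, smul_mul_assoc, e, smul_add, mul_smul_comm, smul_smul]
    congr 1
    rw [show ((2:ℤ):ℂ) = 2 by norm_num, inv_mul_cancel₀ (mul_ne_zero two_ne_zero hμ), one_smul]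
  have hcz : ∀ p q : ℤ, p ≠ 0 → q ≠ 0 → p + q ≠ 0 → a p * a q = a q * a p := by
    intro p q hp hq hpq
    have h := hcomm p q hp hq
    rw [if_neg hpq] at h
    exact sub_eq_zero.1 h
  have c12 : X1 * X2 = X2 * X1 := by
    rw [hX1, hX2]; exact hcz (-1) (-2) (by norm_num) (by norm_num) (by norm_num)
  have cD : D1 * D2 = D2 * D1 := by
    rw [hD1, hD2, smul_mul_assoc, mul_smul_comm, smul_mul_assoc, mul_smul_comm,
      hcz 1 2 (by norm_num) (by norm_num) (by norm_num), smul_comm]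
  have c1D2 : X1 * D2 = D2 * X1 := by
    rw [hX1, hD2, mul_smul_comm, smul_mul_assoc,
      hcz (-1) 2 (by norm_num) (by norm_num) (by norm_num)]
  have c2D1 : X2 * D1 = D1 * X2 := by
    rw [hX2, hD1, mul_smul_comm, smul_mul_assoc,
      hcz (-2) 1 (by norm_num) (by norm_num) (by norm_num)]
  have hMo_mem : ∀ (α : Fin 4 → ℕ) (k : ℤ) (w : V), w ∈ W k →
      Mo X1 X2 D1 D2 α w ∈ W (k + shift α) := by
    intro α k w hw
    have t3 : (D2 ^ α 3) w ∈ W (k + (α 3 : ℤ) * 2) := by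
      rw [hD2]; exact smul_a_pow_mem a W hgr _ 2 (by norm_num) (α 3) k w hw
    have t2 : (D1 ^ α 2) ((D2 ^ α 3) w) ∈ W (k + (α 3 : ℤ) * 2 + (α 2 : ℤ) * 1) := by
      rw [hD1]; exact smul_a_pow_mem a W hgr _ 1 (by norm_num) (α 2) _ _ t3
    have t1 : (X2 ^ α 1) ((D1 ^ α 2) ((D2 ^ α 3) w))
        ∈ W (k + (α 3 : ℤ) * 2 + (α 2 : ℤ) * 1 + (α 1 : ℤ) * (-2)) := by
      rw [hX2]; exact a_pow_mem a W hgr (-2) (by norm_num) (α 1) _ _ t2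
    have t0 : (X1 ^ α 0) ((X2 ^ α 1) ((D1 ^ α 2) ((D2 ^ α 3) w)))
        ∈ W (k + (α 3 : ℤ) * 2 + (α 2 : ℤ) * 1 + (α 1 : ℤ) * (-2) + (α 0 : ℤ) * (-1)) := by
      rw [hX1]; exact a_pow_mem a W hgr (-1) (by norm_num) (α 0) _ _ t1
    have hMoapp : Mo X1 X2 D1 D2 α w
        = (X1 ^ α 0) ((X2 ^ α 1) ((D1 ^ α 2) ((D2 ^ α 3) w))) := by
      simp [Mo, Module.End.mul_apply]
    rw [hMoapp]
    have hidx : k + shift α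
        = k + (α 3 : ℤ) * 2 + (α 2 : ℤ) * 1 + (α 1 : ℤ) * (-2) + (α 0 : ℤ) * (-1) := by
      unfold shift; ring
    rw [hidx]
    exact t0
  exact count W hfd N hfr h1 h2 c12 cD c1D2 c2D1 k0 v hv hvW hMo_mem
end

section
/- Let M be a g'-module with a compatible associative action of A = ℂ[t^p, t^{-p}]. Then the formulas t^n(L_s ⊗ w) = L_{s+n} ⊗ w and a(L_s ⊗ w) = [a, L_s] ⊗ w + L_s ⊗ aw (for n ∈ pℤ, s ∉ pℤ, a ∈ g', w ∈ M) define an Ag'-module structure on g'' ⊗ M, where g'' = span{L_s : s ∉ pℤ}: the g'-action and A-action are compatible, i.e., L_m t^n v - t^n L_m v = n t^{m+n} v and t^n L_r v = L_r t^n v for m,n ∈ pℤ, r ∉ pℤ. -/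
-- The index `s + n` inside `{s : ℤ // s ∉ pℤ}` (for `n ∈ pℤ` the sum is again not in `pℤ`).
open Classical in
noncomputable def addIdx (p : ℕ) (s : {s : ℤ // ¬ (p : ℤ) ∣ s}) (n : ℤ) :
    {s : ℤ // ¬ (p : ℤ) ∣ s} :=
  if h : ¬ (p : ℤ) ∣ (s.1 + n) then ⟨s.1 + n, h⟩ else s

-- The action of `t^n` on `g'' ⊗ M`, realized as `{s // s ∉ pℤ} →₀ M` via
-- `L_s ⊗ w ↔ single s w`:  `t^n (L_s ⊗ w) = L_{s+n} ⊗ w`.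
noncomputable def tOp (p : ℕ) (M : Type) [AddCommGroup M] [Module ℂ M] (n : ℤ) :
    Module.End ℂ ({s : ℤ // ¬ (p : ℤ) ∣ s} →₀ M) :=
  Finsupp.lsum ℂ fun s => Finsupp.lsingle (addIdx p s n)

-- The action of `L_a` (`a ∈ ℤ`) on `g'' ⊗ M`:
-- `a (L_s ⊗ w) = [L_a, L_s] ⊗ w + L_s ⊗ (a w)`, where `[L_m, L_s] = s L_{s+m}` for
-- `m ∈ pℤ` and `[L_r, L_s] = 0` for `r ∉ pℤ`.
open Classical in
noncomputable def lOp (p : ℕ) (M : Type) [AddCommGroup M] [Module ℂ M]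
    (L : ℤ → Module.End ℂ M) (m : ℤ) :
    Module.End ℂ ({s : ℤ // ¬ (p : ℤ) ∣ s} →₀ M) :=
  Finsupp.lsum ℂ fun s =>
    (if (p : ℤ) ∣ m then (s.1 : ℂ) • Finsupp.lsingle (addIdx p s m)
      else (0 : M →ₗ[ℂ] ({s : ℤ // ¬ (p : ℤ) ∣ s} →₀ M)))
    + (Finsupp.lsingle s).comp (L m : M →ₗ[ℂ] M)

section aux
variable {p : ℕ} {M : Type} [AddCommGroup M] [Module ℂ M]

lemma not_dvd_add {s n : ℤ} (hn : (p:ℤ) ∣ n) (hs : ¬ (p:ℤ) ∣ s) : ¬ (p:ℤ) ∣ (s + n) :=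
  fun h => hs (by simpa using h.sub hn)

lemma addIdx_val (s) {n : ℤ} (hn : (p:ℤ) ∣ n) : (addIdx p s n).1 = s.1 + n := by
  rw [addIdx, dif_pos (not_dvd_add hn s.2)]

lemma addIdx_addIdx (s) {m n : ℤ} (hm : (p:ℤ) ∣ m) (hn : (p:ℤ) ∣ n) :
    addIdx p (addIdx p s n) m = addIdx p s (n + m) := by
  apply Subtype.ext
  rw [addIdx_val _ hm, addIdx_val _ hn, addIdx_val _ (hn.add hm), add_assoc]

lemma tOp_single (n : ℤ) (s) (w : M) :
    tOp p M n (Finsupp.single s w) = Finsupp.single (addIdx p s n) w := by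
  simp [tOp]

lemma lOp_single_dvd (L : ℤ → Module.End ℂ M) {m : ℤ} (hm : (p:ℤ) ∣ m) (s) (w : M) :
    lOp p M L m (Finsupp.single s w)
      = (s.1 : ℂ) • Finsupp.single (addIdx p s m) w + Finsupp.single s (L m w) := by
  simp [lOp, hm]

lemma lOp_single_not (L : ℤ → Module.End ℂ M) {r : ℤ} (hr : ¬ (p:ℤ) ∣ r) (s) (w : M) :
    lOp p M L r (Finsupp.single s w) = Finsupp.single s (L r w) := by
  simp [lOp, hr]

end aux

/-- Lemma 3.4: for a `g'`-module `M` with a compatible associative `A = ℂ[t^{±p}]`-action,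
the formulas `t^n(L_s ⊗ w) = L_{s+n} ⊗ w` and `a(L_s ⊗ w) = [a,L_s] ⊗ w + L_s ⊗ aw` define
an `Ag'`-module structure on `g'' ⊗ M`: the `A`-action is associative, the `g'`-bracket
relations hold, and the two actions are compatible
(`L_m t^n v - t^n L_m v = n t^{m+n} v` and `t^n L_r v = L_r t^n v`). -/
theorem stmt_9 (p : ℕ) (hp : 1 < p) (M : Type) [AddCommGroup M] [Module ℂ M]
    (L T : ℤ → Module.End ℂ M)
    (hrep1 : ∀ m n : ℤ, (p : ℤ) ∣ m → (p : ℤ) ∣ n →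
      L m * L n - L n * L m = (n - m : ℂ) • L (m + n))
    (hrep2 : ∀ m r : ℤ, (p : ℤ) ∣ m → ¬ (p : ℤ) ∣ r →
      L m * L r - L r * L m = (r : ℂ) • L (m + r))
    (hrep3 : ∀ r s : ℤ, ¬ (p : ℤ) ∣ r → ¬ (p : ℤ) ∣ s → L r * L s - L s * L r = 0)
    (hA : ∀ m n : ℤ, (p : ℤ) ∣ m → (p : ℤ) ∣ n → T m * T n = T (m + n))
    (hcomp1 : ∀ m n : ℤ, (p : ℤ) ∣ m → (p : ℤ) ∣ n →
      L m * T n - T n * L m = (n : ℂ) • T (m + n))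
    (hcomp2 : ∀ n r : ℤ, (p : ℤ) ∣ n → ¬ (p : ℤ) ∣ r → T n * L r = L r * T n) :
    (∀ m n : ℤ, (p : ℤ) ∣ m → (p : ℤ) ∣ n →
      tOp p M m * tOp p M n = tOp p M (m + n)) ∧
    (∀ m n : ℤ, (p : ℤ) ∣ m → (p : ℤ) ∣ n →
      lOp p M L m * lOp p M L n - lOp p M L n * lOp p M L m
        = (n - m : ℂ) • lOp p M L (m + n)) ∧
    (∀ m r : ℤ, (p : ℤ) ∣ m → ¬ (p : ℤ) ∣ r →
      lOp p M L m * lOp p M L r - lOp p M L r * lOp p M L m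
        = (r : ℂ) • lOp p M L (m + r)) ∧
    (∀ r s : ℤ, ¬ (p : ℤ) ∣ r → ¬ (p : ℤ) ∣ s →
      lOp p M L r * lOp p M L s - lOp p M L s * lOp p M L r = 0) ∧
    (∀ m n : ℤ, (p : ℤ) ∣ m → (p : ℤ) ∣ n →
      lOp p M L m * tOp p M n - tOp p M n * lOp p M L m = (n : ℂ) • tOp p M (m + n)) ∧
    (∀ n r : ℤ, (p : ℤ) ∣ n → ¬ (p : ℤ) ∣ r →
      tOp p M n * lOp p M L r = lOp p M L r * tOp p M n) := by
  refine ⟨?_, ?_, ?_, ?_, ?_, ?_⟩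
  · intro m n hm hn
    apply Finsupp.lhom_ext; intro s w
    rw [Module.End.mul_apply, tOp_single, tOp_single, tOp_single,
      addIdx_addIdx s hm hn, add_comm n m]
  · intro m n hm hn
    apply Finsupp.lhom_ext; intro s w
    have h1 : L m (L n w) = L n (L m w) + (n - m : ℂ) • L (m + n) w := by
      have h := congrFun (congrArg DFunLike.coe (hrep1 m n hm hn)) w
      simp only [LinearMap.sub_apply, Module.End.mul_apply, LinearMap.smul_apply] at h
      exact sub_eq_iff_eq_add'.mp h
    simp only [LinearMap.sub_apply, Module.End.mul_apply, LinearMap.smul_apply,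
      lOp_single_dvd L hm, lOp_single_dvd L hn, lOp_single_dvd L (hm.add hn),
      map_add, map_smul, h1, addIdx_addIdx s hm hn, addIdx_addIdx s hn hm,
      addIdx_val s hm, addIdx_val s hn, Finsupp.single_add, ← Finsupp.smul_single]
    rw [add_comm n m]
    push_cast
    module
  · intro m r hm hr
    apply Finsupp.lhom_ext; intro s w
    have h1 : L m (L r w) = L r (L m w) + (r : ℂ) • L (m + r) w := by
      have h := congrFun (congrArg DFunLike.coe (hrep2 m r hm hr)) w
      simp only [LinearMap.sub_apply, Module.End.mul_apply, LinearMap.smul_apply] at h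
      exact sub_eq_iff_eq_add'.mp h
    have hmr : ¬ (p:ℤ) ∣ (m + r) := fun h => hr (by simpa using h.sub hm)
    simp only [LinearMap.sub_apply, Module.End.mul_apply, LinearMap.smul_apply,
      lOp_single_dvd L hm, lOp_single_not L hr, lOp_single_not L hmr,
      map_add, map_smul, h1, Finsupp.single_add, ← Finsupp.smul_single]
    module
  · intro r s' hr hs'
    apply Finsupp.lhom_ext; intro s w
    have h1 : L r (L s' w) = L s' (L r w) := by
      have h := congrFun (congrArg DFunLike.coe (hrep3 r s' hr hs')) w
      simp only [LinearMap.sub_apply, Module.End.mul_apply, LinearMap.zero_apply] at h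
      exact sub_eq_zero.mp h
    simp only [LinearMap.sub_apply, Module.End.mul_apply, LinearMap.zero_apply,
      lOp_single_not L hr, lOp_single_not L hs', h1, sub_self]
  · intro m n hm hn
    apply Finsupp.lhom_ext; intro s w
    simp only [LinearMap.sub_apply, Module.End.mul_apply, LinearMap.smul_apply,
      tOp_single, lOp_single_dvd L hm, map_add, map_smul,
      addIdx_addIdx s hm hn, addIdx_addIdx s hn hm, addIdx_val s hn]
    rw [add_comm n m]
    push_cast
    module
  · intro n r hn hr
    apply Finsupp.lhom_ext; intro s w
    simp only [Module.End.mul_apply, tOp_single, lOp_single_not L hr]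
end

section
/- Suppose the operators Ω_{m,n} = Σ_{i=0}^{l} (-1)^i C(l,i) L_{m-in} L_{in} annihilate a g'-module M for all m,n ∈ pℤ, with l ≥ 2. Then for any n ∈ pℤ, s ∉ pℤ, and w ∈ M: Σ_{i=0}^{l} (-1)^i C(l,i) L_{n-ip+s} L_{ip} w + Σ_{i=0}^{l} (-1)^i C(l,i) L_{ip+s} L_{n-ip} w = 0. -/
lemma alt0 (l : ℕ) (hl : 1 ≤ l) :
    ∑ i ∈ Finset.range (l+1), (-1:ℂ)^i * (l.choose i : ℂ) = 0 := by
  have h := add_pow (-1:ℂ) 1 l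
  simp [zero_pow (by omega : l ≠ 0)] at h
  rw [← h]

lemma alt1 (l : ℕ) (hl : 2 ≤ l) :
    ∑ i ∈ Finset.range (l+1), (-1:ℂ)^i * (l.choose i : ℂ) * (i : ℂ) = 0 := by
  obtain ⟨k, rfl⟩ : ∃ k, l = k + 1 := ⟨l - 1, by omega⟩
  rw [Finset.sum_range_succ']
  have key : ∀ i : ℕ, (-1:ℂ)^(i+1) * ((k+1).choose (i+1) : ℂ) * (((i:ℕ)+1 : ℕ) : ℂ)
      = -(((k:ℕ)+1 : ℕ) : ℂ) * ((-1:ℂ)^i * (k.choose i : ℂ)) := by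
    intro i
    have h2 : (((k+1) * k.choose i : ℕ) : ℂ) = (((k+1).choose (i+1) * (i+1) : ℕ) : ℂ) := by
      exact_mod_cast congrArg (Nat.cast (R := ℂ)) (Nat.add_one_mul_choose_eq k i)
    push_cast at h2 ⊢
    linear_combination (-1:ℂ)^i * h2
  have : ∑ i ∈ Finset.range (k+1), (-1:ℂ)^(i+1) * ((k+1).choose (i+1) : ℂ) * ((i+1 : ℕ) : ℂ)
      = -(((k:ℕ)+1:ℕ) : ℂ) * ∑ i ∈ Finset.range (k+1), (-1:ℂ)^i * (k.choose i : ℂ) := by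
    rw [Finset.mul_sum]
    exact Finset.sum_congr rfl fun i _ => key i
  rw [this, alt0 k (by omega)]
  simp

/-- If the operators `Ω_{m,n} = Σ_{i=0}^{l} (-1)^i C(l,i) L_{m-in} L_{in}` annihilate a
`g'`-module `M` for all `m,n ∈ pℤ` (with `l ≥ 2`), then for any `n ∈ pℤ`, `s ∉ pℤ` and
`w ∈ M`:
`Σ_i (-1)^i C(l,i) L_{n-ip+s} L_{ip} w + Σ_i (-1)^i C(l,i) L_{ip+s} L_{n-ip} w = 0`. -/
theorem stmt_12 (p : ℕ) (hp : 1 < p) (l : ℕ) (hl : 2 ≤ l)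
    (M : Type) [AddCommGroup M] [Module ℂ M] (L : ℤ → Module.End ℂ M)
    (hrep1 : ∀ m n : ℤ, (p : ℤ) ∣ m → (p : ℤ) ∣ n →
      L m * L n - L n * L m = (n - m : ℂ) • L (m + n))
    (hrep2 : ∀ m r : ℤ, (p : ℤ) ∣ m → ¬ (p : ℤ) ∣ r →
      L m * L r - L r * L m = (r : ℂ) • L (m + r))
    (hrep3 : ∀ r s : ℤ, ¬ (p : ℤ) ∣ r → ¬ (p : ℤ) ∣ s → L r * L s - L s * L r = 0)
    (hOmega : ∀ m n : ℤ, (p : ℤ) ∣ m → (p : ℤ) ∣ n → ∀ w : M,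
      ∑ i ∈ Finset.range (l + 1),
        ((-1 : ℂ) ^ i * (l.choose i : ℂ)) • (L (m - (i : ℤ) * n)) ((L ((i : ℤ) * n)) w)
        = 0) :
    ∀ (n s : ℤ) (w : M), (p : ℤ) ∣ n → ¬ (p : ℤ) ∣ s →
      ∑ i ∈ Finset.range (l + 1),
          ((-1 : ℂ) ^ i * (l.choose i : ℂ)) •
            (L (n - (i : ℤ) * (p : ℤ) + s)) ((L ((i : ℤ) * (p : ℤ))) w)
        + ∑ i ∈ Finset.range (l + 1),
            ((-1 : ℂ) ^ i * (l.choose i : ℂ)) •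
              (L ((i : ℤ) * (p : ℤ) + s)) ((L (n - (i : ℤ) * (p : ℤ))) w)
        = 0 := by
  intro n s w hn hs
  have hs0 : (s : ℂ) ≠ 0 := by
    have h1 : s ≠ 0 := by rintro rfl; exact hs (dvd_zero _)
    exact_mod_cast h1
  -- pointwise commutator
  have comm2 : ∀ m r t : ℤ, (p:ℤ) ∣ m → ¬ (p:ℤ) ∣ r → m + r = t → ∀ x : M,
      L m (L r x) = L r (L m x) + (r : ℂ) • L t x := by
    intro m r t hm hr ht x
    have h := DFunLike.congr_fun (hrep2 m r hm hr) x
    simp only [LinearMap.sub_apply, Module.End.mul_apply, LinearMap.smul_apply] at h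
    rw [← ht]
    exact sub_eq_iff_eq_add'.mp h
  have hpd : ∀ i : ℕ, (p:ℤ) ∣ (i:ℤ) * p := fun i => Dvd.intro_left _ rfl
  have hnd : ∀ i : ℕ, (p:ℤ) ∣ n - (i:ℤ) * p := fun i => dvd_sub hn (hpd i)
  have hips : ∀ i : ℕ, ¬ (p:ℤ) ∣ ((i:ℤ)*p + s) := by
    intro i h
    exact hs (by simpa using dvd_sub h (hpd i))
  -- key pointwise identity
  have key : ∀ i ∈ Finset.range (l+1),
      ((-1:ℂ)^i * (l.choose i : ℂ)) • L (n - (i:ℤ)*p) (L ((i:ℤ)*p) (L s w)) =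
        ((-1:ℂ)^i * (l.choose i : ℂ)) • L s (L (n - (i:ℤ)*p) (L ((i:ℤ)*p) w))
        + (s:ℂ) • (((-1:ℂ)^i * (l.choose i : ℂ)) • L (n - (i:ℤ)*p + s) (L ((i:ℤ)*p) w))
        + (s:ℂ) • (((-1:ℂ)^i * (l.choose i : ℂ)) • L ((i:ℤ)*p + s) (L (n - (i:ℤ)*p) w))
        + ((-1:ℂ)^i * (l.choose i : ℂ) * ((s:ℂ) * (((i:ℤ)*p + s : ℤ) : ℂ))) • L (n + s) w := by
    intro i _
    rw [comm2 ((i:ℤ)*p) s ((i:ℤ)*p + s) (hpd i) hs rfl w, map_add, map_smul,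
        comm2 (n - (i:ℤ)*p) s (n - (i:ℤ)*p + s) (hnd i) hs rfl (L ((i:ℤ)*p) w),
        comm2 (n - (i:ℤ)*p) ((i:ℤ)*p + s) (n + s) (hnd i) (hips i) (by ring) w]
    push_cast
    module
  have hsum := Finset.sum_congr rfl key
  rw [hOmega n p hn (dvd_refl _) (L s w)] at hsum
  rw [Finset.sum_add_distrib, Finset.sum_add_distrib, Finset.sum_add_distrib] at hsum
  -- first sum is L s applied to Omega w = 0
  have h1 : ∑ i ∈ Finset.range (l+1),
      ((-1:ℂ)^i * (l.choose i : ℂ)) • L s (L (n - (i:ℤ)*p) (L ((i:ℤ)*p) w)) = 0 := by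
    have : ∑ i ∈ Finset.range (l+1),
        ((-1:ℂ)^i * (l.choose i : ℂ)) • L s (L (n - (i:ℤ)*p) (L ((i:ℤ)*p) w))
        = L s (∑ i ∈ Finset.range (l+1),
            ((-1:ℂ)^i * (l.choose i : ℂ)) • L (n - (i:ℤ)*p) (L ((i:ℤ)*p) w)) := by
      rw [map_sum]
      exact Finset.sum_congr rfl fun i _ => (map_smul _ _ _).symm
    rw [this, hOmega n p hn (dvd_refl _) w, map_zero]
  -- last sum coefficient vanishes
  have h4 : ∑ i ∈ Finset.range (l+1),
      ((-1:ℂ)^i * (l.choose i : ℂ) * ((s:ℂ) * (((i:ℤ)*p + s : ℤ) : ℂ))) • L (n + s) w = 0 := by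
    rw [← Finset.sum_smul]
    have hc : ∑ i ∈ Finset.range (l+1),
        (-1:ℂ)^i * (l.choose i : ℂ) * ((s:ℂ) * (((i:ℤ)*p + s : ℤ) : ℂ)) = 0 := by
      have e : ∀ i ∈ Finset.range (l+1),
          (-1:ℂ)^i * (l.choose i : ℂ) * ((s:ℂ) * (((i:ℤ)*p + s : ℤ) : ℂ))
          = ((s:ℂ) * (p:ℂ)) * ((-1:ℂ)^i * (l.choose i : ℂ) * (i:ℂ))
            + ((s:ℂ) * (s:ℂ)) * ((-1:ℂ)^i * (l.choose i : ℂ)) := by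
        intro i _
        push_cast
        ring
      rw [Finset.sum_congr rfl e, Finset.sum_add_distrib, ← Finset.mul_sum, ← Finset.mul_sum,
          alt0 l (by omega), alt1 l hl]
      ring
    rw [hc, zero_smul]
  rw [h1, h4, zero_add, add_zero, ← Finset.smul_sum, ← Finset.smul_sum, ← smul_add] at hsum
  exact (smul_eq_zero.mp hsum.symm).resolve_left hs0
end

section
/- Let F = (F_{i,j}) be a (p-1)×p complex matrix (1 ≤ i ≤ p-1, 0 ≤ j ≤ p-1) satisfying F_{r, (i+s mod p)} F_{s,i} = F_{s, (i+r mod p)} F_{r,i} for all 0 ≤ i ≤ p-1, 1 ≤ r,s ≤ p-1. Then for any α, β ∈ ℂ, the formulas L_m v_{j+n} = (α+j+n+mβ) v_{j+n+m} (m,n ∈ pℤ), L_s v_{j+n} = F_{s̄, j} v_{j+n+s} (s ∉ pℤ, s̄ = s mod p), C_i v_{j+n} = 0, define a representation of the gap-p Virasoro algebra g on the space with basis {v_{j+pk} : j ∈ o(F), k ∈ ℤ}, where o(F) = {j : F_{i,j} ≠ 0 for some i}. -/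
-- `o(F) = {j : F_{i,j} ≠ 0 for some i}`.  The matrix `F` is encoded as a function
-- `ZMod p → ZMod p → ℂ` whose row `0` is required to vanish (rows are indexed by
-- `1 ≤ i ≤ p-1`, columns by `0 ≤ j ≤ p-1`).
def oF (p : ℕ) (F : ZMod p → ZMod p → ℂ) : Set (ZMod p) := {j | ∃ i, F i j ≠ 0}

-- The space with basis `{v_{j+pk} : j ∈ o(F), k ∈ ℤ}`, realized with basis indexed by
-- integers whose residue mod `p` lies in `o(F)`.
abbrev VF (p : ℕ) (F : ZMod p → ZMod p → ℂ) : Type :=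
  {n : ℤ // ((n : ZMod p) ∈ oF p F)} →₀ ℂ

-- The action of `L_m` on `V(α,β,F)`:
-- `L_m v_n = (α + n + mβ) v_{n+m}` for `m ∈ pℤ`, and
-- `L_s v_n = F_{s̄, n̄} v_{n+s}` for `s ∉ pℤ`.
open Classical in
noncomputable def lAct (p : ℕ) (F : ZMod p → ZMod p → ℂ) (α β : ℂ) (m : ℤ) :
    Module.End ℂ (VF p F) :=
  Finsupp.lsum ℂ fun n =>
    if hd : (p : ℤ) ∣ m then
      (α + (n.1 : ℂ) + (m : ℂ) * β) • Finsupp.lsingle (⟨n.1 + m, by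
        have h0 : ((m : ℤ) : ZMod p) = 0 := (ZMod.intCast_zmod_eq_zero_iff_dvd m p).2 hd
        show (((n.1 + m : ℤ) : ZMod p) ∈ oF p F)
        rw [Int.cast_add, h0, add_zero]
        exact n.2⟩ : {n : ℤ // ((n : ZMod p) ∈ oF p F)})
    else if hmem : (((n.1 + m : ℤ) : ZMod p) ∈ oF p F) then
      F (m : ZMod p) (n.1 : ZMod p) •
        Finsupp.lsingle (⟨n.1 + m, hmem⟩ : {n : ℤ // ((n : ZMod p) ∈ oF p F)})
    else 0

-- The (trivial) action of the central elements `C_i` on `V(α,β,F)`.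
noncomputable def cAct (p : ℕ) (F : ZMod p → ZMod p → ℂ) (_ : ZMod p) :
    Module.End ℂ (VF p F) := 0

section Aux

variable {p : ℕ} {F : ZMod p → ZMod p → ℂ} {α β : ℂ}

lemma mem_shift {m : ℤ} (hd : (p : ℤ) ∣ m) (x : {n : ℤ // ((n : ZMod p) ∈ oF p F)}) :
    (((x.1 + m : ℤ) : ZMod p) ∈ oF p F) := by
  have h0 : ((m : ℤ) : ZMod p) = 0 := (ZMod.intCast_zmod_eq_zero_iff_dvd m p).2 hd
  rw [Int.cast_add, h0, add_zero]; exact x.2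

lemma lAct_single_dvd {m : ℤ} (hd : (p : ℤ) ∣ m) (x : {n : ℤ // ((n : ZMod p) ∈ oF p F)})
    (c : ℂ) :
    lAct p F α β m (Finsupp.single x c) =
      (α + (x.1 : ℂ) + (m : ℂ) * β) • Finsupp.single ⟨x.1 + m, mem_shift hd x⟩ c := by
  rw [lAct, Finsupp.lsum_single, dif_pos hd]; simp

lemma lAct_single_mem {m : ℤ} (hd : ¬ (p : ℤ) ∣ m) (x : {n : ℤ // ((n : ZMod p) ∈ oF p F)})
    (hmem : (((x.1 + m : ℤ) : ZMod p) ∈ oF p F)) (c : ℂ) :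
    lAct p F α β m (Finsupp.single x c) =
      F (m : ZMod p) (x.1 : ZMod p) • Finsupp.single ⟨x.1 + m, hmem⟩ c := by
  rw [lAct, Finsupp.lsum_single, dif_neg hd, dif_pos hmem]; simp

lemma lAct_single_nomem {m : ℤ} (hd : ¬ (p : ℤ) ∣ m) (x : {n : ℤ // ((n : ZMod p) ∈ oF p F)})
    (hmem : ¬ (((x.1 + m : ℤ) : ZMod p) ∈ oF p F)) (c : ℂ) :
    lAct p F α β m (Finsupp.single x c) = 0 := by
  rw [lAct, Finsupp.lsum_single, dif_neg hd, dif_neg hmem]; rfl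

lemma smul_single_eq {a b : ℤ} {ha : ((a : ZMod p) ∈ oF p F)} {hb : ((b : ZMod p) ∈ oF p F)}
    {s t c : ℂ} (h : a = b) (hst : s = t) :
    s • Finsupp.single (⟨a, ha⟩ : {n : ℤ // ((n : ZMod p) ∈ oF p F)}) c =
      t • Finsupp.single ⟨b, hb⟩ c := by subst h; subst hst; rfl

lemma sub_single_eq {a b d : ℤ} {ha : ((a : ZMod p) ∈ oF p F)} {hb : ((b : ZMod p) ∈ oF p F)}
    {hd : ((d : ZMod p) ∈ oF p F)} {A B C c : ℂ} (h1 : a = d) (h2 : b = d) (h3 : A - B = C) :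
    A • Finsupp.single (⟨a, ha⟩ : {n : ℤ // ((n : ZMod p) ∈ oF p F)}) c -
      B • Finsupp.single ⟨b, hb⟩ c = C • Finsupp.single ⟨d, hd⟩ c := by
  subst h1; subst h2; rw [← sub_smul, h3]

end Aux

set_option maxHeartbeats 1000000 in
/-- If `F` satisfies condition (III), then the formulas above define a representation of the
gap-`p` Virasoro algebra `g` on the space with basis `{v_{j+pk} : j ∈ o(F), k ∈ ℤ}`:
all bracket relations of `g` hold as commutators of the operators. -/
theorem stmt_13 (p : ℕ) (hp : 1 < p) (F : ZMod p → ZMod p → ℂ) (α β : ℂ)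
    (hF0 : ∀ j, F 0 j = 0)
    (hIII : ∀ (i r s : ZMod p), r ≠ 0 → s ≠ 0 → F r (i + s) * F s i = F s (i + r) * F r i) :
    (∀ m n : ℤ, (p : ℤ) ∣ m → (p : ℤ) ∣ n →
      lAct p F α β m * lAct p F α β n - lAct p F α β n * lAct p F α β m
        = (n - m : ℂ) • lAct p F α β (m + n)
          + (if m + n = 0 then
              ((1 : ℂ) / 12) * (((m / (p : ℤ) : ℤ) : ℂ) ^ 3 - ((m / (p : ℤ) : ℤ) : ℂ))
            else 0) • cAct p F 0) ∧
    (∀ m r : ℤ, (p : ℤ) ∣ m → ¬ (p : ℤ) ∣ r →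
      lAct p F α β m * lAct p F α β r - lAct p F α β r * lAct p F α β m
        = (r : ℂ) • lAct p F α β (m + r)) ∧
    (∀ r s : ℤ, ¬ (p : ℤ) ∣ r → ¬ (p : ℤ) ∣ s →
      lAct p F α β r * lAct p F α β s - lAct p F α β s * lAct p F α β r
        = if r + s = 0 then (r : ℂ) • cAct p F (r : ZMod p) else 0) ∧
    (∀ (i : ZMod p) (m : ℤ),
      cAct p F i * lAct p F α β m - lAct p F α β m * cAct p F i = 0) := by
  refine ⟨?_, ?_, ?_, ?_⟩
  · -- both in pℤ
    intro m n hm hn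
    have hmn : (p : ℤ) ∣ (m + n) := dvd_add hm hn
    apply Finsupp.lhom_ext; intro x c
    simp only [LinearMap.sub_apply, Module.End.mul_apply, LinearMap.add_apply,
      LinearMap.smul_apply, cAct, LinearMap.zero_apply, smul_zero, add_zero]
    rw [lAct_single_dvd hn x c, map_smul, lAct_single_dvd hm,
      lAct_single_dvd hm x c, map_smul, lAct_single_dvd hn,
      lAct_single_dvd hmn x c, smul_smul, smul_smul, smul_smul]
    exact sub_single_eq (by ring) (by ring) (by push_cast; ring)
  · -- m in pℤ, r not
    intro m r hm hr
    have hmr : ¬ (p : ℤ) ∣ (m + r) := fun h => hr (by simpa using dvd_sub h hm)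
    have h0 : ((m : ℤ) : ZMod p) = 0 := (ZMod.intCast_zmod_eq_zero_iff_dvd m p).2 hm
    apply Finsupp.lhom_ext; intro x c
    simp only [LinearMap.sub_apply, Module.End.mul_apply, LinearMap.smul_apply]
    by_cases hmem : (((x.1 + r : ℤ) : ZMod p) ∈ oF p F)
    · have hmem2 : ((((⟨x.1 + m, mem_shift hm x⟩ :
          {n : ℤ // ((n : ZMod p) ∈ oF p F)}).1 + r : ℤ) : ZMod p) ∈ oF p F) := by
        show (((x.1 + m + r : ℤ) : ZMod p) ∈ oF p F)
        have : ((x.1 + m + r : ℤ) : ZMod p) = ((x.1 + r : ℤ) : ZMod p) := by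
          push_cast [h0]; ring
        rw [this]; exact hmem
      have hmem3 : (((x.1 + (m + r) : ℤ) : ZMod p) ∈ oF p F) := by
        have : ((x.1 + (m + r) : ℤ) : ZMod p) = ((x.1 + r : ℤ) : ZMod p) := by
          push_cast [h0]; ring
        rw [this]; exact hmem
      rw [lAct_single_mem hr x hmem c, map_smul, lAct_single_dvd hm,
        lAct_single_dvd hm x c, map_smul, lAct_single_mem hr _ hmem2,
        lAct_single_mem hmr x hmem3 c, smul_smul, smul_smul, smul_smul]
      have e1 : (((⟨x.1 + m, mem_shift hm x⟩ :
          {n : ℤ // ((n : ZMod p) ∈ oF p F)}).1 : ℤ) : ZMod p) = ((x.1 : ℤ) : ZMod p) := by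
        show ((x.1 + m : ℤ) : ZMod p) = _
        push_cast [h0]; ring
      have e2 : (((m + r : ℤ)) : ZMod p) = ((r : ℤ) : ZMod p) := by push_cast [h0]; ring
      rw [e1, e2]
      exact sub_single_eq (by ring) (by ring) (by push_cast; ring)
    · have hmem2 : ¬ ((((⟨x.1 + m, mem_shift hm x⟩ :
          {n : ℤ // ((n : ZMod p) ∈ oF p F)}).1 + r : ℤ) : ZMod p) ∈ oF p F) := by
        show ¬ (((x.1 + m + r : ℤ) : ZMod p) ∈ oF p F)
        have : ((x.1 + m + r : ℤ) : ZMod p) = ((x.1 + r : ℤ) : ZMod p) := by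
          push_cast [h0]; ring
        rw [this]; exact hmem
      have hmem3 : ¬ (((x.1 + (m + r) : ℤ) : ZMod p) ∈ oF p F) := by
        have : ((x.1 + (m + r) : ℤ) : ZMod p) = ((x.1 + r : ℤ) : ZMod p) := by
          push_cast [h0]; ring
        rw [this]; exact hmem
      rw [lAct_single_nomem hr x hmem c, map_zero,
        lAct_single_dvd hm x c, map_smul, lAct_single_nomem hr _ hmem2,
        lAct_single_nomem hmr x hmem3 c]
      simp
  · -- r, s not in pℤ
    intro r s hr hs
    have hrz : ((r : ℤ) : ZMod p) ≠ 0 := fun h =>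
      hr ((ZMod.intCast_zmod_eq_zero_iff_dvd r p).1 h)
    have hsz : ((s : ℤ) : ZMod p) ≠ 0 := fun h =>
      hs ((ZMod.intCast_zmod_eq_zero_iff_dvd s p).1 h)
    have hRHS : (if r + s = 0 then (r : ℂ) • cAct p F (r : ZMod p) else 0)
        = (0 : Module.End ℂ (VF p F)) := by
      split <;> simp [cAct]
    rw [hRHS]
    apply Finsupp.lhom_ext; intro x c
    simp only [LinearMap.sub_apply, Module.End.mul_apply, LinearMap.zero_apply]
    by_cases hs1 : (((x.1 + s : ℤ) : ZMod p) ∈ oF p F) <;>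
      by_cases hr1 : (((x.1 + r : ℤ) : ZMod p) ∈ oF p F)
    · -- both intermediate states exist
      by_cases h2 : (((x.1 + s + r : ℤ) : ZMod p) ∈ oF p F)
      · have h2' : (((x.1 + r + s : ℤ) : ZMod p) ∈ oF p F) := by
          have e : ((x.1 + r + s : ℤ) : ZMod p) = ((x.1 + s + r : ℤ) : ZMod p) := by
            push_cast; ring
          rw [e]; exact h2
        rw [lAct_single_mem hs x hs1 c, map_smul, lAct_single_mem hr _ h2,
          lAct_single_mem hr x hr1 c, map_smul, lAct_single_mem hs _ h2',
          smul_smul, smul_smul, sub_eq_zero]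
        refine smul_single_eq (by ring) ?_
        push_cast
        linear_combination
          hIII ((x.1 : ℤ) : ZMod p) ((r : ℤ) : ZMod p) ((s : ℤ) : ZMod p) hrz hsz
      · have h2' : ¬ (((x.1 + r + s : ℤ) : ZMod p) ∈ oF p F) := by
          have e : ((x.1 + r + s : ℤ) : ZMod p) = ((x.1 + s + r : ℤ) : ZMod p) := by
            push_cast; ring
          rw [e]; exact h2
        rw [lAct_single_mem hs x hs1 c, map_smul, lAct_single_nomem hr _ h2,
          lAct_single_mem hr x hr1 c, map_smul, lAct_single_nomem hs _ h2',
          smul_zero, smul_zero, sub_zero]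
    · -- x+s exists, x+r does not
      rw [lAct_single_nomem hr x hr1 c, map_zero, sub_zero,
        lAct_single_mem hs x hs1 c, map_smul]
      by_cases h2 : (((x.1 + s + r : ℤ) : ZMod p) ∈ oF p F)
      · rw [lAct_single_mem hr _ h2, smul_smul]
        refine smul_eq_zero_of_left ?_ _
        have hr1' : F ((s : ℤ) : ZMod p) (((x.1 : ℤ) : ZMod p) + ((r : ℤ) : ZMod p)) = 0 := by
          by_contra h
          refine hr1 ?_
          have e : ((x.1 + r : ℤ) : ZMod p) = ((x.1 : ℤ) : ZMod p) + ((r : ℤ) : ZMod p) := by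
            push_cast; ring
          rw [e]; exact ⟨_, h⟩
        push_cast
        linear_combination
          hIII ((x.1 : ℤ) : ZMod p) ((r : ℤ) : ZMod p) ((s : ℤ) : ZMod p) hrz hsz +
            F ((r : ℤ) : ZMod p) ((x.1 : ℤ) : ZMod p) * hr1'
      · rw [lAct_single_nomem hr _ h2, smul_zero]
    · -- x+r exists, x+s does not
      rw [lAct_single_nomem hs x hs1 c, map_zero, zero_sub, neg_eq_zero,
        lAct_single_mem hr x hr1 c, map_smul]
      by_cases h2 : (((x.1 + r + s : ℤ) : ZMod p) ∈ oF p F)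
      · rw [lAct_single_mem hs _ h2, smul_smul]
        refine smul_eq_zero_of_left ?_ _
        have hs1' : F ((r : ℤ) : ZMod p) (((x.1 : ℤ) : ZMod p) + ((s : ℤ) : ZMod p)) = 0 := by
          by_contra h
          refine hs1 ?_
          have e : ((x.1 + s : ℤ) : ZMod p) = ((x.1 : ℤ) : ZMod p) + ((s : ℤ) : ZMod p) := by
            push_cast; ring
          rw [e]; exact ⟨_, h⟩
        push_cast
        linear_combination
          (- hIII ((x.1 : ℤ) : ZMod p) ((r : ℤ) : ZMod p) ((s : ℤ) : ZMod p) hrz hsz) +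
            F ((s : ℤ) : ZMod p) ((x.1 : ℤ) : ZMod p) * hs1'
      · rw [lAct_single_nomem hs _ h2, smul_zero]
    · rw [lAct_single_nomem hs x hs1 c, map_zero, lAct_single_nomem hr x hr1 c, map_zero,
        sub_zero]
  · intro i m
    show cAct p F i * lAct p F α β m - lAct p F α β m * cAct p F i = 0
    rw [cAct, zero_mul, mul_zero]
    exact sub_self (0 : Module.End ℂ (VF p F))
end

section
/- The Virasoro (type V) module V_j(α,β) over g(0) is reducible if and only if α ∈ -j + pℤ and β ∈ {0,1}. -/
-- The type-`V` module `V_j(α,β)` over `g(0) = span{L_m, C_0 : m ∈ pℤ} ≅ Vir`: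
-- basis `{v_{j+pk} : k ∈ ℤ}` (indexed here by `k`), `C_0` acting as `0`, and
-- `L_m v_{j+pk} = (α + j + pk + mβ) v_{j+pk+m}` for `m ∈ pℤ` (so `k ↦ k + m/p`).
noncomputable def lActV (p : ℕ) (j : ℤ) (α β : ℂ) (m : ℤ) : Module.End ℂ (ℤ →₀ ℂ) :=
  Finsupp.lsum ℂ fun k =>
    (α + (j : ℂ) + (p : ℂ) * (k : ℂ) + (m : ℂ) * β) • Finsupp.lsingle (k + m / (p : ℤ))

lemma lActV_single (p : ℕ) (j : ℤ) (α β : ℂ) (m k : ℤ) :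
    lActV p j α β m (Finsupp.single k 1) =
      (α + (j : ℂ) + (p : ℂ) * (k : ℂ) + (m : ℂ) * β) • Finsupp.single (k + m / (p : ℤ)) 1 := by
  rw [lActV, Finsupp.lsum_single, LinearMap.smul_apply, Finsupp.lsingle_apply]

lemma lActV_apply (p : ℕ) (j : ℤ) (α β : ℂ) (m : ℤ) (v : ℤ →₀ ℂ) (t : ℤ) :
    lActV p j α β m v t =
      (α + (j : ℂ) + (p : ℂ) * ((t - m / (p:ℤ) : ℤ) : ℂ) + (m : ℂ) * β) * v (t - m / (p:ℤ)) := by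
  classical
  rw [lActV, Finsupp.lsum_apply, Finsupp.sum_apply]
  rw [Finsupp.sum_eq_single (t - m / (p:ℤ))]
  · rw [LinearMap.smul_apply, Finsupp.lsingle_apply, Finsupp.smul_apply,
      Finsupp.single_apply, if_pos (by omega)]
    rw [smul_eq_mul]
  · intro k hk hne
    rw [LinearMap.smul_apply, Finsupp.lsingle_apply, Finsupp.smul_apply,
      Finsupp.single_apply, if_neg (by omega), smul_zero]
  · simp

lemma lActV_zero_apply (p : ℕ) (j : ℤ) (α β : ℂ) (v : ℤ →₀ ℂ) (t : ℤ) :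
    lActV p j α β 0 v t = (α + (j : ℂ) + (p : ℂ) * (t : ℂ)) * v t := by
  have := lActV_apply p j α β 0 v t
  simpa using this

lemma diag_mem (p : ℕ) (hp : 0 < p) (j : ℤ) (α β : ℂ) (N : Submodule ℂ (ℤ →₀ ℂ))
    (hN : ∀ v ∈ N, lActV p j α β 0 v ∈ N) :
    ∀ n : ℕ, ∀ v : ℤ →₀ ℂ, v.support.card ≤ n → v ∈ N →
      ∀ k : ℤ, v k • Finsupp.single k 1 ∈ N := by
  intro n
  induction n with
  | zero =>
    intro v hc hv k
    have : v = 0 := by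
      rwa [Nat.le_zero, Finset.card_eq_zero, Finsupp.support_eq_empty] at hc
    simp [this, Submodule.zero_mem]
  | succ n ih =>
    intro v hc hv k
    by_cases hvk : v k = 0
    · simp [hvk, Submodule.zero_mem]
    by_cases hone : v.support ⊆ {k}
    · have hveq : v = v k • Finsupp.single k 1 := by
        ext t
        by_cases ht : t = k
        · simp [ht]
        · have : t ∉ v.support := fun h => ht (Finset.mem_singleton.1 (hone h))
          simp [Finsupp.notMem_support_iff.1 this, Finsupp.single_apply, Ne.symm ht]
      rw [← hveq]; exact hv
    · obtain ⟨k0, hk0s, hk0ne⟩ : ∃ k0, k0 ∈ v.support ∧ k0 ≠ k := by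
        rcases Finset.not_subset.1 hone with ⟨k0, h1, h2⟩
        exact ⟨k0, h1, fun h => h2 (by simp [h])⟩
      set lam : ℤ → ℂ := fun t => α + (j : ℂ) + (p : ℂ) * (t : ℂ) with hlam
      have hlaminj : Function.Injective lam := by
        intro a b hab
        have hp0 : (p : ℂ) ≠ 0 := Nat.cast_ne_zero.2 hp.ne'
        have h1 : (p : ℂ) * (a : ℂ) = (p : ℂ) * (b : ℂ) := by
          simp only [hlam] at hab; linear_combination hab
        have : (a : ℂ) = b := mul_left_cancel₀ hp0 h1
        exact_mod_cast this
      set w : ℤ →₀ ℂ := lActV p j α β 0 v - lam k0 • v with hw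
      have hwmem : w ∈ N := Submodule.sub_mem N (hN v hv) (Submodule.smul_mem N _ hv)
      have hwapp : ∀ t, w t = (lam t - lam k0) * v t := by
        intro t
        simp [hw, lActV_zero_apply, hlam]
        ring
      have hwsupp : w.support ⊆ v.support.erase k0 := by
        intro t ht
        rw [Finsupp.mem_support_iff, hwapp] at ht
        have hvt : v t ≠ 0 := fun h => ht (by simp [h])
        have : t ≠ k0 := fun h => ht (by simp [h])
        exact Finset.mem_erase.2 ⟨this, Finsupp.mem_support_iff.2 hvt⟩
      have hcard : w.support.card ≤ n := by
        have h1 : w.support.card ≤ (v.support.erase k0).card := Finset.card_le_card hwsupp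
        have h2 : (v.support.erase k0).card < v.support.card := Finset.card_erase_lt_of_mem hk0s
        omega
      have hwk := ih w hcard hwmem k
      rw [hwapp] at hwk
      have hne : lam k - lam k0 ≠ 0 := sub_ne_zero.2 fun h => hk0ne (hlaminj h).symm
      have := Submodule.smul_mem N (lam k - lam k0)⁻¹ hwk
      rwa [smul_smul, inv_mul_cancel_left₀ hne] at this

lemma hop (p : ℕ) (hp : 0 < p) (j : ℤ) (α β : ℂ) (N : Submodule ℂ (ℤ →₀ ℂ))
    (hN : ∀ m : ℤ, (p : ℤ) ∣ m → ∀ v ∈ N, lActV p j α β m v ∈ N)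
    (k n : ℤ) (hk : Finsupp.single k (1:ℂ) ∈ N)
    (hc : α + (j : ℂ) + (p : ℂ) * (k : ℂ) + (p : ℂ) * (n : ℂ) * β ≠ 0) :
    Finsupp.single (k + n) (1:ℂ) ∈ N := by
  have hdvd : (p : ℤ) ∣ (p : ℤ) * n := ⟨n, rfl⟩
  have h1 := hN ((p : ℤ) * n) hdvd _ hk
  rw [lActV_single] at h1
  have hp0 : (p : ℤ) ≠ 0 := by exact_mod_cast hp.ne'
  rw [Int.mul_ediv_cancel_left n hp0] at h1
  have hcast : (((p : ℤ) * n : ℤ) : ℂ) = (p : ℂ) * (n : ℂ) := by push_cast; ring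
  rw [hcast] at h1
  have h2 := Submodule.smul_mem N (α + (j : ℂ) + (p : ℂ) * (k : ℂ) + (p : ℂ) * (n : ℂ) * β)⁻¹ h1
  rwa [smul_smul, inv_mul_cancel₀ hc, one_smul] at h2

lemma top_of_singles (N : Submodule ℂ (ℤ →₀ ℂ))
    (h : ∀ t : ℤ, Finsupp.single t (1:ℂ) ∈ N) : N = ⊤ := by
  rw [eq_top_iff]
  intro w _
  rw [← Finsupp.sum_single w]
  exact Submodule.sum_mem N fun t ht => by
    rw [← Finsupp.smul_single_one]
    exact Submodule.smul_mem N _ (h t)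

lemma reach (p : ℕ) (hp : 0 < p) (j : ℤ) (α β : ℂ) (N : Submodule ℂ (ℤ →₀ ℂ))
    (hN : ∀ m : ℤ, (p : ℤ) ∣ m → ∀ v ∈ N, lActV p j α β m v ∈ N)
    (hcon : ¬ ((∃ k : ℤ, α + (j : ℂ) = (p : ℂ) * (k : ℂ)) ∧ (β = 0 ∨ β = 1)))
    (k : ℤ) (hk : Finsupp.single k (1:ℂ) ∈ N) (t : ℤ) :
    Finsupp.single t (1:ℂ) ∈ N := by
  have hp0 : (p : ℂ) ≠ 0 := Nat.cast_ne_zero.2 hp.ne'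
  by_cases hβ : β = 0 ∨ β = 1
  · have hA : ¬ ∃ k' : ℤ, α + (j : ℂ) = (p : ℂ) * (k' : ℂ) := fun h => hcon ⟨h, hβ⟩
    rcases hβ with h0 | h1
    · have hc : α + (j : ℂ) + (p : ℂ) * (k : ℂ) + (p : ℂ) * ((t - k : ℤ) : ℂ) * β ≠ 0 := by
        rw [h0, mul_zero, add_zero]
        intro h
        exact hA ⟨-k, by push_cast; linear_combination h⟩
      have := hop p hp j α β N hN k (t - k) hk hc
      simpa using this
    · have hc : α + (j : ℂ) + (p : ℂ) * (k : ℂ) + (p : ℂ) * ((t - k : ℤ) : ℂ) * β ≠ 0 := by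
        rw [h1, mul_one]
        intro h
        exact hA ⟨-t, by push_cast; push_cast at h; linear_combination h⟩
      have := hop p hp j α β N hN k (t - k) hk hc
      simpa using this
  · push_neg at hβ
    obtain ⟨hβ0, hβ1⟩ := hβ
    by_cases hdir : α + (j : ℂ) + (p : ℂ) * (k : ℂ) + (p : ℂ) * ((t - k : ℤ) : ℂ) * β ≠ 0
    · have := hop p hp j α β N hN k (t - k) hk hdir
      simpa using this
    · push_neg at hdir
      obtain ⟨s, hs0, hs⟩ : ∃ s : ℤ, s ≠ 0 ∧
          α + (j : ℂ) + (p : ℂ) * (k : ℂ) + (p : ℂ) * (s : ℂ) * β ≠ 0 := by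
        by_cases h1 : α + (j : ℂ) + (p : ℂ) * (k : ℂ) + (p : ℂ) * ((1:ℤ) : ℂ) * β ≠ 0
        · exact ⟨1, one_ne_zero, h1⟩
        · push_neg at h1
          refine ⟨2, two_ne_zero, fun h2 => ?_⟩
          have : (p : ℂ) * β = 0 := by push_cast at h1 h2 ⊢; linear_combination h2 - h1
          rcases mul_eq_zero.1 this with h | h
          · exact hp0 h
          · exact hβ0 h
      have hstep1 := hop p hp j α β N hN k s hk hs
      have hc2 : α + (j : ℂ) + (p : ℂ) * ((k + s : ℤ) : ℂ) +
          (p : ℂ) * ((t - k - s : ℤ) : ℂ) * β ≠ 0 := by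
        intro h
        have hsC : (s : ℂ) ≠ 0 := Int.cast_ne_zero.2 hs0
        have : (p : ℂ) * (s : ℂ) * (1 - β) = 0 := by
          push_cast at h hdir ⊢; linear_combination h - hdir
        rcases mul_eq_zero.1 this with h' | h'
        · rcases mul_eq_zero.1 h' with h'' | h''
          · exact hp0 h''
          · exact hsC h''
        · exact hβ1 (by linear_combination -h')
      have hstep2 := hop p hp j α β N hN (k + s) (t - k - s) hstep1 hc2
      have hidx : k + s + (t - k - s) = t := by ring
      rwa [hidx] at hstep2

lemma red_beta0 (p : ℕ) (j : ℤ) (α : ℂ) (k0 : ℤ)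
    (hk0 : α + (j : ℂ) = (p : ℂ) * (k0 : ℂ)) :
    ∃ N : Submodule ℂ (ℤ →₀ ℂ),
      (∀ m : ℤ, (p : ℤ) ∣ m → ∀ v ∈ N, lActV p j α 0 m v ∈ N) ∧ N ≠ ⊥ ∧ N ≠ ⊤ := by
  set u : ℤ →₀ ℂ := Finsupp.single (-k0) 1 with hu
  refine ⟨Submodule.span ℂ {u}, ?_, ?_, ?_⟩
  · intro m hm v hv
    obtain ⟨c, rfl⟩ := Submodule.mem_span_singleton.1 hv
    rw [map_smul]
    have h1 : lActV p j α 0 m u = 0 := by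
      rw [hu, lActV_single]
      have : α + (j : ℂ) + (p : ℂ) * ((-k0 : ℤ) : ℂ) + (m : ℂ) * 0 = 0 := by
        push_cast
        linear_combination hk0
      rw [this, zero_smul]
    rw [h1, smul_zero]
    exact Submodule.zero_mem _
  · rw [Ne, Submodule.span_singleton_eq_bot]
    exact (fun h => one_ne_zero (Finsupp.single_eq_zero.1 h))
  · intro htop
    have : Finsupp.single (1 - k0) (1:ℂ) ∈ Submodule.span ℂ {u} := htop ▸ Submodule.mem_top
    obtain ⟨c, hc⟩ := Submodule.mem_span_singleton.1 this
    have := DFunLike.congr_fun hc (1 - k0)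
    rw [hu, Finsupp.smul_apply, Finsupp.single_apply, Finsupp.single_apply,
      if_neg (by omega), if_pos rfl, smul_zero] at this
    exact one_ne_zero this.symm

lemma red_beta1 (p : ℕ) (hp : 0 < p) (j : ℤ) (α : ℂ) (k0 : ℤ)
    (hk0 : α + (j : ℂ) = (p : ℂ) * (k0 : ℂ)) :
    ∃ N : Submodule ℂ (ℤ →₀ ℂ),
      (∀ m : ℤ, (p : ℤ) ∣ m → ∀ v ∈ N, lActV p j α 1 m v ∈ N) ∧ N ≠ ⊥ ∧ N ≠ ⊤ := by
  have hp0 : (p : ℤ) ≠ 0 := by exact_mod_cast hp.ne'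
  refine ⟨LinearMap.ker (Finsupp.lapply (-k0) : (ℤ →₀ ℂ) →ₗ[ℂ] ℂ), ?_, ?_, ?_⟩
  · intro m hm v hv
    obtain ⟨d, rfl⟩ := hm
    rw [LinearMap.mem_ker, Finsupp.lapply_apply] at hv ⊢
    rw [lActV_apply, Int.mul_ediv_cancel_left d hp0]
    have : α + (j : ℂ) + (p : ℂ) * ((-k0 - d : ℤ) : ℂ) + (((p : ℤ) * d : ℤ) : ℂ) * 1 = 0 := by
      push_cast
      linear_combination hk0
    rw [this, zero_mul]
  · rw [Submodule.ne_bot_iff]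
    refine ⟨Finsupp.single (1 - k0) 1, ?_, (fun h => one_ne_zero (Finsupp.single_eq_zero.1 h))⟩
    rw [LinearMap.mem_ker, Finsupp.lapply_apply, Finsupp.single_apply, if_neg (by omega)]
  · intro htop
    have : Finsupp.single (-k0) (1:ℂ) ∈ LinearMap.ker (Finsupp.lapply (-k0) : (ℤ →₀ ℂ) →ₗ[ℂ] ℂ) :=
      htop ▸ Submodule.mem_top
    rw [LinearMap.mem_ker, Finsupp.lapply_apply, Finsupp.single_apply, if_pos rfl] at this
    exact one_ne_zero this

/-- The module `V_j(α,β)` over `g(0)` is reducible (has a nonzero proper invariant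
subspace) if and only if `α ∈ -j + pℤ` and `β ∈ {0,1}`. -/
theorem stmt_14 (p : ℕ) (hp : 1 < p) (j : ℤ) (hj0 : 0 ≤ j) (hjp : j < (p : ℤ))
    (α β : ℂ) :
    (∃ N : Submodule ℂ (ℤ →₀ ℂ),
      (∀ m : ℤ, (p : ℤ) ∣ m → ∀ v ∈ N, lActV p j α β m v ∈ N) ∧ N ≠ ⊥ ∧ N ≠ ⊤)
    ↔ ((∃ k : ℤ, α + (j : ℂ) = (p : ℂ) * (k : ℂ)) ∧ (β = 0 ∨ β = 1)) := by
  have hp' : 0 < p := by omega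
  constructor
  · rintro ⟨N, hInv, hbot, htop⟩
    by_contra hcon
    apply htop
    obtain ⟨v, hvN, hv0⟩ := Submodule.ne_bot_iff N |>.1 hbot
    obtain ⟨k, hvk⟩ : ∃ k, v k ≠ 0 := by
      by_contra h
      push_neg at h
      exact hv0 (Finsupp.ext h)
    have hsk : v k • Finsupp.single k (1:ℂ) ∈ N :=
      diag_mem p hp' j α β N (fun w hw => hInv 0 ⟨0, by ring⟩ w hw) v.support.card v le_rfl hvN k
    have hk : Finsupp.single k (1:ℂ) ∈ N := by
      have := Submodule.smul_mem N (v k)⁻¹ hsk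
      rwa [smul_smul, inv_mul_cancel₀ hvk, one_smul] at this
    exact top_of_singles N (reach p hp' j α β N hInv hcon k hk)
  · rintro ⟨⟨k0, hk0⟩, hβ | hβ⟩
    · subst hβ
      exact red_beta0 p j α k0 hk0
    · subst hβ
      exact red_beta1 p hp' j α k0 hk0
end

section
/- Let M = V(α,β,F) be an irreducible module of intermediate series over the gap-p Virasoro algebra with more than one component, and let M(i) be a component. Then M = U(g'')·M(i), where g'' = span{L_s : s ∉ pℤ}. Moreover, if L_s M(i) ≠ 0 for some s ∉ pℤ, then L_s M = M and L_s M(j) ≠ 0 for every component M(j). -/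
-- The component `M(j) = V_{(j)} = span{v_{j+pk} : k ∈ ℤ}` of `M = V(α,β,F)`.
noncomputable def component (p : ℕ) (F : ZMod p → ZMod p → ℂ) (j : ZMod p) :
    Submodule ℂ (VF p F) :=
  Submodule.span ℂ
    {x : VF p F | ∃ n : {n : ℤ // ((n : ZMod p) ∈ oF p F)},
      ((n.1 : ZMod p) = j) ∧ x = Finsupp.single n 1}

namespace Stmt17Aux

variable (p : ℕ) (F : ZMod p → ZMod p → ℂ) (α β : ℂ)

open Classical in
lemma lAct_single_dvd (m : ℤ) (hd : (p : ℤ) ∣ m)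
    (n : {n : ℤ // ((n : ZMod p) ∈ oF p F)}) (c : ℂ)
    (hmem : (((n.1 + m : ℤ) : ZMod p) ∈ oF p F)) :
    lAct p F α β m (Finsupp.single n c) =
      (α + (n.1 : ℂ) + (m : ℂ) * β) • Finsupp.single ⟨n.1 + m, hmem⟩ c := by
  simp only [lAct, Finsupp.lsum_single]
  rw [dif_pos hd]
  simp

open Classical in
lemma lAct_single_nd (m : ℤ) (hm : ¬ (p : ℤ) ∣ m)
    (n : {n : ℤ // ((n : ZMod p) ∈ oF p F)}) (c : ℂ)
    (hmem : (((n.1 + m : ℤ) : ZMod p) ∈ oF p F)) :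
    lAct p F α β m (Finsupp.single n c) =
      F (m : ZMod p) (n.1 : ZMod p) • Finsupp.single ⟨n.1 + m, hmem⟩ c := by
  simp only [lAct, Finsupp.lsum_single]
  rw [dif_neg hm, dif_pos hmem]
  simp

open Classical in
lemma lAct_single_nd_zero (m : ℤ) (hm : ¬ (p : ℤ) ∣ m)
    (n : {n : ℤ // ((n : ZMod p) ∈ oF p F)}) (c : ℂ)
    (hF : F (m : ZMod p) (n.1 : ZMod p) = 0) :
    lAct p F α β m (Finsupp.single n c) = 0 := by
  simp only [lAct, Finsupp.lsum_single]
  rw [dif_neg hm]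
  split_ifs with h
  · simp [hF]
  · simp

/-- The submodule of vectors all of whose support classes lie in `T`. -/
noncomputable def compsSub (T : Set (ZMod p)) : Submodule ℂ (VF p F) where
  carrier := {v | ∀ n, v n ≠ 0 → ((n.1 : ZMod p) ∈ T)}
  zero_mem' := by intro n h; simp at h
  add_mem' := by
    intro a b ha hb n h
    have : a n ≠ 0 ∨ b n ≠ 0 := by
      by_contra hc
      push_neg at hc
      exact h (by simp [Finsupp.add_apply, hc.1, hc.2])
    rcases this with h' | h'
    · exact ha n h'
    · exact hb n h'
  smul_mem' := by
    intro c v hv n h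
    apply hv
    intro h0
    exact h (by simp [Finsupp.smul_apply, h0])

lemma mem_compsSub {T : Set (ZMod p)} {v : VF p F} :
    v ∈ compsSub p F T ↔ ∀ n, v n ≠ 0 → ((n.1 : ZMod p) ∈ T) := Iff.rfl

lemma single_mem_compsSub {T : Set (ZMod p)} {n : {n : ℤ // ((n : ZMod p) ∈ oF p F)}}
    (c : ℂ) (h : (n.1 : ZMod p) ∈ T) : Finsupp.single n c ∈ compsSub p F T := by
  intro m hm
  rw [Finsupp.single_apply_ne_zero] at hm
  rw [hm.1]
  exact h

open Classical in
lemma compsSub_inv {T : Set (ZMod p)}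
    (hT : ∀ j t : ZMod p, j ∈ T → j ∈ oF p F → F t j ≠ 0 → j + t ∈ T)
    (m : ℤ) (v : VF p F) (hv : v ∈ compsSub p F T) :
    lAct p F α β m v ∈ compsSub p F T := by
  simp only [lAct, Finsupp.lsum_apply]
  apply Submodule.finsuppSum_mem
  intro n hn
  have hnT : (n.1 : ZMod p) ∈ T := hv n hn
  by_cases hd : (p : ℤ) ∣ m
  · rw [dif_pos hd]
    simp only [LinearMap.smul_apply, Finsupp.lsingle_apply]
    refine Submodule.smul_mem _ _ (single_mem_compsSub p F _ ?_)
    have h0 : ((m : ℤ) : ZMod p) = 0 := (ZMod.intCast_zmod_eq_zero_iff_dvd m p).2 hd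
    show (((n.1 + m : ℤ) : ZMod p) ∈ T)
    rw [Int.cast_add, h0, add_zero]
    exact hnT
  · rw [dif_neg hd]
    split_ifs with hmem
    · simp only [LinearMap.smul_apply, Finsupp.lsingle_apply]
      by_cases hF : F (m : ZMod p) (n.1 : ZMod p) = 0
      · rw [hF, zero_smul]; exact Submodule.zero_mem _
      · refine Submodule.smul_mem _ _ (single_mem_compsSub p F _ ?_)
        show (((n.1 + m : ℤ) : ZMod p) ∈ T)
        rw [Int.cast_add]
        exact hT _ _ hnT n.2 hF
    · simp only [LinearMap.zero_apply]
      exact Submodule.zero_mem _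

lemma eq_top_of_singles (P : Submodule ℂ (VF p F))
    (h : ∀ (n : {n : ℤ // ((n : ZMod p) ∈ oF p F)}) (c : ℂ), Finsupp.single n c ∈ P) :
    P = ⊤ := by
  rw [eq_top_iff]
  intro v _
  rw [← Finsupp.sum_single v]
  exact Submodule.finsuppSum_mem ℂ P v _ (fun n _ => h n (v n))

end Stmt17Aux

/-- Proposition 5.1 (1),(2): let `M = V(α,β,F)` be an irreducible module of intermediate
series over the gap-`p` Virasoro algebra with more than one component and let `M(i)` be a
component.  Then `M = U(g'')·M(i)` (every `g''`-invariant subspace containing `M(i)` is all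
of `M`), and if `L_s M(i) ≠ 0` for some `s ∉ pℤ` then `L_s M = M` and `L_s M(j) ≠ 0` for
every component `M(j)`. -/
theorem stmt_17 (p : ℕ) (hp : 1 < p) (F : ZMod p → ZMod p → ℂ) (α β : ℂ)
    (hF0 : ∀ j, F 0 j = 0)
    (hI : (0 : ZMod p) ∈ oF p F)
    (hII : ∀ i j : ZMod p, F i j ≠ 0 → ∃ s, F s (i + j) ≠ 0)
    (hIII : ∀ (i r s : ZMod p), r ≠ 0 → s ≠ 0 → F r (i + s) * F s i = F s (i + r) * F r i)
    (hnt : (oF p F).Nontrivial)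
    (hirr : ∀ N : Submodule ℂ (VF p F),
      (∀ (m : ℤ) (v), v ∈ N → lAct p F α β m v ∈ N) → N = ⊥ ∨ N = ⊤) :
    (∀ i ∈ oF p F, ∀ N : Submodule ℂ (VF p F),
      (∀ s : ℤ, ¬ (p : ℤ) ∣ s → ∀ v ∈ N, lAct p F α β s v ∈ N) →
      component p F i ≤ N → N = ⊤) ∧
    (∀ i ∈ oF p F, ∀ s : ℤ, ¬ (p : ℤ) ∣ s →
      (∃ v ∈ component p F i, lAct p F α β s v ≠ 0) →
      Submodule.map (lAct p F α β s : VF p F →ₗ[ℂ] VF p F) ⊤ = ⊤ ∧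
      ∀ j ∈ oF p F, ∃ v ∈ component p F j, lAct p F α β s v ≠ 0) := by
  classical
  haveI : NeZero p := ⟨by omega⟩
  have hlift : ∀ j : ZMod p, ((j.val : ℤ) : ZMod p) = j := by
    intro j; push_cast; exact ZMod.natCast_rightInverse j
  constructor
  · -- part 1
    intro i hi N hN hiN
    set S : Set (ZMod p) :=
      {j | ∀ n : {n : ℤ // ((n : ZMod p) ∈ oF p F)},
        (n.1 : ZMod p) = j → Finsupp.single n (1 : ℂ) ∈ N} with hSdef
    have hiS : i ∈ S := fun n hn => hiN (Submodule.subset_span ⟨n, hn, rfl⟩)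
    have hSclosed : ∀ j t : ZMod p, j ∈ S → j ∈ oF p F → F t j ≠ 0 → j + t ∈ S := by
      intro j t hjS hjoF hFt n hn
      have ht0 : t ≠ 0 := fun h => hFt (by rw [h]; exact hF0 j)
      have hs : ((t.val : ℤ) : ZMod p) = t := hlift t
      have hps : ¬ (p : ℤ) ∣ (t.val : ℤ) := by
        intro h
        exact ht0 (by rw [← hs]; exact (ZMod.intCast_zmod_eq_zero_iff_dvd _ p).2 h)
      have hn' : ((n.1 - (t.val : ℤ) : ℤ) : ZMod p) = j := by
        rw [Int.cast_sub, hs, hn]; ring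
      have hmemj : ((n.1 - (t.val : ℤ) : ℤ) : ZMod p) ∈ oF p F := by rw [hn']; exact hjoF
      have h1 : Finsupp.single (⟨n.1 - (t.val : ℤ), hmemj⟩ :
          {n : ℤ // ((n : ZMod p) ∈ oF p F)}) (1 : ℂ) ∈ N := hjS _ hn'
      have hmem2 : (((n.1 - (t.val : ℤ)) + (t.val : ℤ) : ℤ) : ZMod p) ∈ oF p F := by
        rw [sub_add_cancel]; exact n.2
      have h2 := hN _ hps _ h1
      rw [Stmt17Aux.lAct_single_nd p F α β _ hps _ 1 hmem2] at h2
      have he : (⟨(n.1 - (t.val : ℤ)) + (t.val : ℤ), hmem2⟩ :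
          {n : ℤ // ((n : ZMod p) ∈ oF p F)}) = n := Subtype.ext (by ring)
      rw [he, hs, hn'] at h2
      have h3 := N.smul_mem (F t j)⁻¹ h2
      rwa [smul_smul, inv_mul_cancel₀ hFt, one_smul] at h3
    rcases hirr (Stmt17Aux.compsSub p F S) (Stmt17Aux.compsSub_inv p F α β hSclosed)
      with hbot | htop
    · exfalso
      have hmem : Finsupp.single (⟨(i.val : ℤ), by rw [hlift]; exact hi⟩ :
          {n : ℤ // ((n : ZMod p) ∈ oF p F)}) (1 : ℂ) ∈ Stmt17Aux.compsSub p F S :=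
        Stmt17Aux.single_mem_compsSub p F _ (by rw [hlift]; exact hiS)
      rw [hbot, Submodule.mem_bot] at hmem
      exact one_ne_zero ((Finsupp.single_eq_zero).1 hmem)
    · apply Stmt17Aux.eq_top_of_singles
      intro n c
      have hmem : Finsupp.single n (1 : ℂ) ∈ Stmt17Aux.compsSub p F S := by
        rw [htop]; trivial
      have hnS : (n.1 : ZMod p) ∈ S := hmem n (by simp [Finsupp.single_eq_same])
      have h1 : Finsupp.single n (1 : ℂ) ∈ N := hnS n rfl
      have h2 := N.smul_mem c h1
      rwa [Finsupp.smul_single, smul_eq_mul, mul_one] at h2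
  · -- part 2
    rintro i hi s hps ⟨v, hv, hvne⟩
    have hr0 : (s : ZMod p) ≠ 0 := fun h => hps ((ZMod.intCast_zmod_eq_zero_iff_dvd s p).1 h)
    have hFri : F (s : ZMod p) i ≠ 0 := by
      intro h0
      apply hvne
      have hker : component p F i ≤ LinearMap.ker (lAct p F α β s) := by
        rw [component]
        apply Submodule.span_le.2
        rintro x ⟨n, hn, rfl⟩
        exact LinearMap.mem_ker.2
          (Stmt17Aux.lAct_single_nd_zero p F α β s hps n 1 (by rw [hn]; exact h0))
      exact LinearMap.mem_ker.1 (hker hv)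
    have hZclosed : ∀ j t : ZMod p, j ∈ {j : ZMod p | F (s : ZMod p) j = 0} → j ∈ oF p F →
        F t j ≠ 0 → j + t ∈ {j : ZMod p | F (s : ZMod p) j = 0} := by
      intro j t hj _ hFt
      have ht0 : t ≠ 0 := fun h => hFt (by rw [h]; exact hF0 j)
      have h3 := hIII j (s : ZMod p) t hr0 ht0
      have hz : F (s : ZMod p) (j + t) * F t j = 0 := by
        rw [h3, show F (s : ZMod p) j = 0 from hj, mul_zero]
      exact (mul_eq_zero.1 hz).resolve_right hFt
    have hall : ∀ j ∈ oF p F, F (s : ZMod p) j ≠ 0 := by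
      rcases hirr (Stmt17Aux.compsSub p F {j : ZMod p | F (s : ZMod p) j = 0})
          (Stmt17Aux.compsSub_inv p F α β hZclosed) with hbot | htop
      · intro j hj hFz
        have hmem : Finsupp.single (⟨(j.val : ℤ), by rw [hlift]; exact hj⟩ :
            {n : ℤ // ((n : ZMod p) ∈ oF p F)}) (1 : ℂ) ∈
              Stmt17Aux.compsSub p F {j : ZMod p | F (s : ZMod p) j = 0} :=
          Stmt17Aux.single_mem_compsSub p F _
            (by show F _ _ = 0; rw [hlift]; exact hFz)
        rw [hbot, Submodule.mem_bot] at hmem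
        exact one_ne_zero ((Finsupp.single_eq_zero).1 hmem)
      · exfalso
        have hm : Finsupp.single (⟨(i.val : ℤ), by rw [hlift]; exact hi⟩ :
            {n : ℤ // ((n : ZMod p) ∈ oF p F)}) (1 : ℂ) ∈
              Stmt17Aux.compsSub p F {j : ZMod p | F (s : ZMod p) j = 0} := by
          rw [htop]; trivial
        have h4 := hm ⟨(i.val : ℤ), by rw [hlift]; exact hi⟩
          (by rw [Finsupp.single_eq_same]; exact one_ne_zero)
        exact hFri (by rwa [hlift i] at h4)
    have hoF : ∀ j ∈ oF p F, j + (s : ZMod p) ∈ oF p F := by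
      intro j hj
      obtain ⟨t, ht⟩ := hII (s : ZMod p) j (hall j hj)
      exact ⟨t, by rw [add_comm]; exact ht⟩
    have hiter : ∀ (k : ℕ), ∀ j ∈ oF p F, j + k • (s : ZMod p) ∈ oF p F := by
      intro k
      induction k with
      | zero => intro j hj; simpa using hj
      | succ k ih =>
        intro j hj
        have h5 := hoF _ (ih j hj)
        rw [succ_nsmul, ← add_assoc]
        exact h5
    have hsub : ∀ j ∈ oF p F, j - (s : ZMod p) ∈ oF p F := by
      intro j hj
      have h1 := hiter (p - 1) j hj
      have h2 : ((p - 1 : ℕ) : ZMod p) = -1 := by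
        rw [Nat.cast_sub (by omega : 1 ≤ p), Nat.cast_one, ZMod.natCast_self, zero_sub]
      rw [nsmul_eq_mul, h2] at h1
      have h6 : j + -1 * (s : ZMod p) = j - (s : ZMod p) := by ring
      rwa [h6] at h1
    refine ⟨?_, ?_⟩
    · rw [Submodule.map_top]
      apply Stmt17Aux.eq_top_of_singles
      intro m c
      have hjm : ((m.1 - s : ℤ) : ZMod p) ∈ oF p F := by
        rw [Int.cast_sub]
        exact hsub _ m.2
      have hmem : (((m.1 - s) + s : ℤ) : ZMod p) ∈ oF p F := by
        rw [sub_add_cancel]; exact m.2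
      rw [LinearMap.mem_range]
      refine ⟨Finsupp.single (⟨m.1 - s, hjm⟩ : {n : ℤ // ((n : ZMod p) ∈ oF p F)})
        ((F (s : ZMod p) ((m.1 - s : ℤ) : ZMod p))⁻¹ * c), ?_⟩
      rw [Stmt17Aux.lAct_single_nd p F α β s hps _ _ hmem]
      have he : (⟨(m.1 - s) + s, hmem⟩ : {n : ℤ // ((n : ZMod p) ∈ oF p F)}) = m :=
        Subtype.ext (by ring)
      rw [he, Finsupp.smul_single, smul_eq_mul, mul_inv_cancel_left₀ (hall _ hjm)]
    · intro j hj
      set nj : {n : ℤ // ((n : ZMod p) ∈ oF p F)} :=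
        ⟨(j.val : ℤ), by rw [hlift]; exact hj⟩ with hnjdef
      refine ⟨Finsupp.single nj 1, Submodule.subset_span ⟨nj, hlift j, rfl⟩, ?_⟩
      have hmem : ((nj.1 + s : ℤ) : ZMod p) ∈ oF p F := by
        rw [Int.cast_add]
        have h7 : ((nj.1 : ℤ) : ZMod p) = j := hlift j
        rw [h7]
        exact hoF j hj
      rw [Stmt17Aux.lAct_single_nd p F α β s hps nj 1 hmem]
      refine smul_ne_zero ?_ ?_
      · rw [show ((nj.1 : ℤ) : ZMod p) = j from hlift j]; exact hall j hj
      · simp [Finsupp.single_eq_zero]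
end

section
/- For p = 5, suppose a (4×5) matrix F has all entries in rows 1 and 2 nonzero and rows 3, 4 zero, and F satisfies condition (III): F_{r,(i+s mod 5)}F_{s,i} = F_{s,(i+r mod 5)}F_{r,i} for all i and r,s ∈ {1,2}. Then the second row is determined by the first row and F_{2,0}: F_{2,1} = F_{1,2}F_{2,0}/F_{1,0}, F_{2,2} = F_{1,2}F_{1,3}F_{2,0}/(F_{1,0}F_{1,1}), F_{2,3} = F_{1,3}F_{1,4}F_{2,0}/(F_{1,0}F_{1,1}), and F_{2,4} = F_{1,4}F_{2,0}/F_{1,1}. -/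
/-- Example 3 of the paper (`p = 5`): if a `4 × 5` matrix `F` (rows `1 ≤ i ≤ 4`, columns
`0 ≤ j ≤ 4`, encoded as a function `ZMod 5 → ZMod 5 → ℂ`) has all entries of rows `1,2`
nonzero, rows `3,4` zero, and satisfies condition (III) for `r,s ∈ {1,2}`, then the second
row is determined by the first row and `F_{2,0}`. -/
theorem stmt_19 (F : ZMod 5 → ZMod 5 → ℂ)
    (h1 : ∀ j : ZMod 5, F 1 j ≠ 0) (h2 : ∀ j : ZMod 5, F 2 j ≠ 0)
    (h3 : ∀ j : ZMod 5, F 3 j = 0) (h4 : ∀ j : ZMod 5, F 4 j = 0)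
    (hIII : ∀ (i r s : ZMod 5), (r = 1 ∨ r = 2) → (s = 1 ∨ s = 2) →
      F r (i + s) * F s i = F s (i + r) * F r i) :
    F 2 1 = F 1 2 * F 2 0 / F 1 0 ∧
    F 2 2 = F 1 2 * F 1 3 * F 2 0 / (F 1 0 * F 1 1) ∧
    F 2 3 = F 1 3 * F 1 4 * F 2 0 / (F 1 0 * F 1 1) ∧
    F 2 4 = F 1 4 * F 2 0 / F 1 1 := by
  have e0 := hIII 0 2 1 (Or.inr rfl) (Or.inl rfl)
  have e1 := hIII 1 2 1 (Or.inr rfl) (Or.inl rfl)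
  have e2 := hIII 2 2 1 (Or.inr rfl) (Or.inl rfl)
  have e3 := hIII 3 2 1 (Or.inr rfl) (Or.inl rfl)
  norm_num at e0 e1 e2 e3
  rw [show (5 : ZMod 5) = 0 by decide] at e3
  have h10 := h1 0; have h11 := h1 1; have h12 := h1 2; have h13 := h1 3
  have g1 : F 2 1 = F 1 2 * F 2 0 / F 1 0 := by
    field_simp; linear_combination e0
  have g2 : F 2 2 = F 1 2 * F 1 3 * F 2 0 / (F 1 0 * F 1 1) := by
    field_simp; linear_combination F 1 0 * e1 + F 1 3 * e0
  have g3 : F 2 3 = F 1 3 * F 1 4 * F 2 0 / (F 1 0 * F 1 1) := by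
    have h : F 2 3 = F 1 4 * F 2 2 / F 1 2 := by
      field_simp; linear_combination e2
    rw [h, g2]; field_simp
  have g4 : F 2 4 = F 1 4 * F 2 0 / F 1 1 := by
    have h : F 2 4 = F 1 0 * F 2 3 / F 1 3 := by
      field_simp; linear_combination e3
    rw [h, g3]; field_simp
  exact ⟨g1, g2, g3, g4⟩
end
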